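/- arXiv:1102.5228 — 13 statements merged into one kernel-verified Lean document; each statement's English description precedes it below -/
import Mathlib

section
/- Let d, m be positive integers, let E denote the m×m matrix all of whose entries are 1, and let C : ℝ^d × ℝ^d → Matrix (Fin m) (Fin m) ℂ satisfy C(x,y) = conjugate transpose of C(y,x) for all x,y. Then C is an m-variate positive definite function on ℝ^d if and only if for every r > 0 the function (x,y) ↦ exp*(r C(x,y)) − E, where exp* denotes the componentwise (entrywise) exponential, is an m-variate positive definite function on ℝ^d. -/
open scoped Matrix BigOperators ComplexOrder Kronecker

set_option linter.unusedSectionVars false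
set_option maxHeartbeats 2000000

section Aux
variable {ι : Type*} [Fintype ι] [DecidableEq ι]

private lemma kron_psd' {A B : Matrix ι ι ℂ} (hA : A.PosSemidef) (hB : B.PosSemidef) :
    (A ⊗ₖ B).PosSemidef := by
  exact hA.kronecker hB

private lemma schur_psd' {A B : Matrix ι ι ℂ} (hA : A.PosSemidef) (hB : B.PosSemidef) :
    (Matrix.of fun i j => A i j * B i j).PosSemidef := by
  have h : (Matrix.of fun i j => A i j * B i j)
      = (A ⊗ₖ B).submatrix (fun i => (i, i)) (fun i => (i, i)) := by
    ext i j; simp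
  rw [h]
  exact (kron_psd' hA hB).submatrix _

private lemma hadPow_psd' {A : Matrix ι ι ℂ} (hA : A.PosSemidef) (N : ℕ) :
    (Matrix.of fun i j => A i j ^ (N + 1)).PosSemidef := by
  induction N with
  | zero =>
    have h : (Matrix.of fun i j => A i j ^ (0 + 1)) = A := by ext i j; simp
    rwa [h]
  | succ N ih =>
    have h : (Matrix.of fun i j => A i j ^ (N + 1 + 1))
        = Matrix.of fun i j => A i j * (Matrix.of fun i j => A i j ^ (N + 1)) i j := by
      ext i j; simp [pow_succ]; ring
    rw [h]
    exact schur_psd' hA ih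

private lemma tail_summable' (z : ℂ) :
    Summable (fun N : ℕ => z ^ (N + 1) / (N + 1).factorial) := by
  have := NormedSpace.expSeries_div_summable z
  exact (summable_nat_add_iff 1).mpr this

private lemma exp_sub_one_tsum' (z : ℂ) :
    Complex.exp z - 1 = ∑' N : ℕ, z ^ (N + 1) / (N + 1).factorial := by
  have h : Complex.exp z = ∑' n : ℕ, z ^ n / n.factorial := by
    rw [Complex.exp_eq_exp_ℂ, NormedSpace.exp_eq_tsum_div]
  have hs := NormedSpace.expSeries_div_summable z
  rw [h, hs.tsum_eq_zero_add]
  simp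

private lemma fact_inv_nonneg' (N : ℕ) : (0 : ℂ) ≤ ((N.factorial : ℂ))⁻¹ := by
  have h : ((N.factorial : ℂ))⁻¹ = ((((N.factorial : ℝ))⁻¹ : ℝ) : ℂ) := by
    push_cast; ring
  rw [h, Complex.zero_le_real]
  positivity

private lemma expm1_psd' {A : Matrix ι ι ℂ} (hA : A.PosSemidef) :
    (Matrix.of fun i j => Complex.exp (A i j) - 1).PosSemidef := by
  refine Matrix.PosSemidef.of_dotProduct_mulVec_nonneg ?_ ?_
  · have hH := hA.1
    ext i j
    have hji : (starRingEnd ℂ) (A j i) = A i j := by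
      conv_rhs => rw [← hH]
      simp [Matrix.conjTranspose_apply]
    simp [Matrix.conjTranspose_apply, ← Complex.exp_conj, hji]
  · intro v
    have key : star v ⬝ᵥ (Matrix.of fun i j => Complex.exp (A i j) - 1) *ᵥ v
        = ∑' N : ℕ, ((((N+1).factorial : ℂ))⁻¹
            * (star v ⬝ᵥ (Matrix.of fun i j => A i j ^ (N + 1)) *ᵥ v)) := by
      have step1 : star v ⬝ᵥ (Matrix.of fun i j => Complex.exp (A i j) - 1) *ᵥ v
          = ∑ i, ∑ j, star (v i) * ((Complex.exp (A i j) - 1) * v j) := by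
        simp [dotProduct, Matrix.mulVec, Finset.mul_sum, mul_assoc]
      rw [step1]
      have step2 : ∀ i j, star (v i) * ((Complex.exp (A i j) - 1) * v j)
          = ∑' N : ℕ, star (v i) * (A i j ^ (N+1) / (N+1).factorial * v j) := by
        intro i j
        rw [exp_sub_one_tsum']
        rw [← tsum_mul_right, ← tsum_mul_left]
      have hsummable : ∀ i j,
          Summable (fun N : ℕ => star (v i) * (A i j ^ (N+1) / (N+1).factorial * v j)) :=
        fun i j => (((tail_summable' (A i j)).mul_right (v j)).mul_left (star (v i)))
      calc ∑ i, ∑ j, star (v i) * ((Complex.exp (A i j) - 1) * v j)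
          = ∑ i, ∑ j, ∑' N : ℕ, star (v i) * (A i j ^ (N+1) / (N+1).factorial * v j) :=
            Finset.sum_congr rfl fun i _ => Finset.sum_congr rfl fun j _ => step2 i j
        _ = ∑' N : ℕ, ∑ i, ∑ j, star (v i) * (A i j ^ (N+1) / (N+1).factorial * v j) := by
            rw [eq_comm]
            rw [Summable.tsum_finsetSum (fun i _ => summable_sum fun j _ => hsummable i j)]
            refine Finset.sum_congr rfl fun i _ => ?_
            rw [Summable.tsum_finsetSum (fun j _ => hsummable i j)]
        _ = ∑' N : ℕ, ((((N+1).factorial : ℂ))⁻¹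
            * (star v ⬝ᵥ (Matrix.of fun i j => A i j ^ (N + 1)) *ᵥ v)) := by
            refine tsum_congr fun N => ?_
            simp only [dotProduct, Matrix.mulVec, Matrix.of_apply, Finset.mul_sum,
              Pi.star_apply]
            refine Finset.sum_congr rfl fun i _ => Finset.sum_congr rfl fun j _ => ?_
            rw [div_eq_mul_inv]
            ring
    rw [key]
    refine tsum_nonneg fun N => ?_
    exact mul_nonneg (fact_inv_nonneg' _) ((hadPow_psd' hA N).dotProduct_mulVec_nonneg v)

private lemma sum_form_eq' {n m : ℕ} (M : Fin n → Fin n → Matrix (Fin m) (Fin m) ℂ)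
    (a : Fin n → Fin m → ℂ) :
    ∑ p, ∑ q, a p ⬝ᵥ (M p q).mulVec (star (a q))
      = star (fun i : Fin n × Fin m => star (a i.1 i.2)) ⬝ᵥ
          ((Matrix.of fun i j : Fin n × Fin m => M i.1 j.1 i.2 j.2) *ᵥ
            fun i => star (a i.1 i.2)) := by
  simp only [dotProduct, Matrix.mulVec, Matrix.of_apply, Pi.star_apply, star_star,
    Fintype.sum_prod_type, Finset.mul_sum]
  refine Finset.sum_congr rfl fun p _ => ?_
  rw [Finset.sum_comm]

private lemma tendsto_expm1_div' (c : ℂ) :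
    Filter.Tendsto (fun r : ℝ => (r:ℂ)⁻¹ * (Complex.exp (r * c) - 1))
      (nhdsWithin 0 (Set.Ioi 0)) (nhds c) := by
  have h1 : HasDerivAt (fun r : ℝ => (r : ℂ) * c) c 0 := by
    simpa using (Complex.ofRealCLM.hasDerivAt (x := (0:ℝ))).mul_const c
  have h : HasDerivAt (fun r : ℝ => Complex.exp ((r:ℝ) * c)) c 0 := by simpa using h1.cexp
  have h2 := (hasDerivAt_iff_tendsto_slope.mp h).mono_left
    (nhdsWithin_mono _ (by intro x hx; simpa using ne_of_gt hx))
  refine h2.congr (fun r => ?_)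
  simp [slope, Complex.real_smul]

end Aux

/-- An `m`-variate positive definite function (cross covariance function) on `ℝ^d`. -/
def IsCrossPosDef (d m : ℕ) (C : (Fin d → ℝ) → (Fin d → ℝ) → Matrix (Fin m) (Fin m) ℂ) : Prop :=
  (∀ x y, C x y = (C y x)ᴴ) ∧
  ∀ (n : ℕ) (x : Fin n → (Fin d → ℝ)) (a : Fin n → (Fin m → ℂ)),
    0 ≤ ∑ p, ∑ q, a p ⬝ᵥ (C (x p) (x q)).mulVec (star (a q))

/-- `C` is an `m`-variate positive definite function on `ℝ^d` iff for every `r > 0` the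
componentwise exponential `exp*(rC) − E` (with `E` the all-ones matrix) is one. -/
theorem crossPosDef_iff_starExp_sub_one (d m : ℕ) (hd : 0 < d) (hm : 0 < m)
    (C : (Fin d → ℝ) → (Fin d → ℝ) → Matrix (Fin m) (Fin m) ℂ)
    (hHerm : ∀ x y, C x y = (C y x)ᴴ)
    (E : Matrix (Fin m) (Fin m) ℂ) (hE : E = Matrix.of fun _ _ => (1 : ℂ)) :
    IsCrossPosDef d m C ↔
      ∀ r : ℝ, 0 < r →
        IsCrossPosDef d m
          (fun x y => (Matrix.of fun j k => Complex.exp (r * C x y j k)) - E) := by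
  subst hE
  have hermExp : ∀ (r : ℝ) (x y : Fin d → ℝ),
      ((Matrix.of fun j k => Complex.exp (r * C x y j k)) - Matrix.of fun _ _ => (1:ℂ))
        = ((Matrix.of fun j k => Complex.exp (r * C y x j k)) - Matrix.of fun _ _ => (1:ℂ))ᴴ := by
    intro r x y
    ext j k
    have harg : (starRingEnd ℂ) ((r:ℂ) * C y x k j) = (r:ℂ) * C x y j k := by
      rw [map_mul, Complex.conj_ofReal]
      congr 1
      rw [hHerm x y]
      rfl
    simp only [Matrix.sub_apply, Matrix.of_apply, Matrix.conjTranspose_apply, star_sub, star_one]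
    rw [← starRingEnd_apply, ← Complex.exp_conj, harg]
  constructor
  · rintro ⟨-, hpos⟩ r hr
    refine ⟨fun x y => hermExp r x y, ?_⟩
    intro n x a
    -- the big matrices
    set bigC : Matrix (Fin n × Fin m) (Fin n × Fin m) ℂ :=
      Matrix.of fun i j => C (x i.1) (x j.1) i.2 j.2 with hbigC
    have hCpsd : bigC.PosSemidef := by
      refine Matrix.PosSemidef.of_dotProduct_mulVec_nonneg ?_ ?_
      · ext i j
        simp only [hbigC, Matrix.conjTranspose_apply, Matrix.of_apply]
        rw [hHerm (x i.1) (x j.1)]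
        rfl
      · intro v
        have h0 := hpos n x (fun p j => star (v (p, j)))
        rw [sum_form_eq'] at h0
        have hv : (fun i : Fin n × Fin m => star (star (v (i.1, i.2)))) = v := by
          funext i; simp
        rw [hv] at h0
        exact h0
    have hBpsd : ((r:ℂ) • bigC).PosSemidef := by
      refine Matrix.PosSemidef.of_dotProduct_mulVec_nonneg ?_ ?_
      · show ((r:ℂ) • bigC)ᴴ = (r:ℂ) • bigC
        rw [Matrix.conjTranspose_smul, hCpsd.1]
        rw [show star ((r:ℂ)) = ((r:ℂ)) from Complex.conj_ofReal r]
      · intro v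
        rw [Matrix.smul_mulVec, dotProduct_smul, smul_eq_mul]
        refine mul_nonneg ?_ (hCpsd.dotProduct_mulVec_nonneg v)
        rw [Complex.zero_le_real]
        exact le_of_lt hr
    have hexp := expm1_psd' hBpsd
    beta_reduce
    rw [sum_form_eq']
    have hmat : (Matrix.of fun i j : Fin n × Fin m =>
        ((((Matrix.of fun j' k' => Complex.exp (r * C (x i.1) (x j.1) j' k')) -
          Matrix.of fun _ _ => (1:ℂ)) : Matrix (Fin m) (Fin m) ℂ) i.2 j.2))
        = Matrix.of fun i j => Complex.exp (((r:ℂ) • bigC) i j) - 1 := by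
      ext i j
      simp [hbigC, Matrix.sub_apply]
    rw [hmat]
    exact hexp.dotProduct_mulVec_nonneg _
  · intro h
    refine ⟨hHerm, ?_⟩
    intro n x a
    set G : ℝ → ℂ := fun r => (r:ℂ)⁻¹ * ∑ p, ∑ q, a p ⬝ᵥ
      (((Matrix.of fun j k => Complex.exp (r * C (x p) (x q) j k)) -
        Matrix.of fun _ _ => (1:ℂ))).mulVec (star (a q)) with hG
    have hGnn : ∀ r ∈ Set.Ioi (0:ℝ), 0 ≤ G r := by
      intro r hr
      have hr' : 0 < r := hr
      have h2 := (h r hr').2 n x a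
      beta_reduce at h2
      refine mul_nonneg ?_ h2
      rw [show ((r:ℂ))⁻¹ = ((r⁻¹ : ℝ) : ℂ) by push_cast; ring, Complex.zero_le_real]
      positivity
    set Q : ℂ := ∑ p, ∑ q, a p ⬝ᵥ (C (x p) (x q)).mulVec (star (a q)) with hQ
    have htend : Filter.Tendsto G (nhdsWithin 0 (Set.Ioi 0)) (nhds Q) := by
      have hGeq : G = fun r : ℝ => ∑ p, ∑ q, ∑ j, ∑ k,
          a p j * (((r:ℂ)⁻¹ * (Complex.exp (r * C (x p) (x q) j k) - 1)) * star (a q k)) := by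
        funext r
        rw [hG]
        simp only [dotProduct, Matrix.mulVec, Matrix.sub_apply, Matrix.of_apply,
          Pi.star_apply, Finset.mul_sum]
        refine Finset.sum_congr rfl fun p _ => Finset.sum_congr rfl fun q _ =>
          Finset.sum_congr rfl fun j _ => Finset.sum_congr rfl fun k _ => ?_
        ring
      have hQeq : Q = ∑ p, ∑ q, ∑ j, ∑ k,
          a p j * (C (x p) (x q) j k * star (a q k)) := by
        rw [hQ]
        simp only [dotProduct, Matrix.mulVec, Pi.star_apply, Finset.mul_sum]
      rw [hGeq, hQeq]
      refine tendsto_finset_sum _ fun p _ => tendsto_finset_sum _ fun q _ =>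
        tendsto_finset_sum _ fun j _ => tendsto_finset_sum _ fun k _ => ?_
      exact Filter.Tendsto.const_mul _ ((tendsto_expm1_div' _).mul_const _)
    have hev : ∀ᶠ r in nhdsWithin 0 (Set.Ioi 0), 0 ≤ G r :=
      eventually_nhdsWithin_of_forall hGnn
    have hre : (0:ℝ) ≤ Q.re := by
      have h1 : Filter.Tendsto (fun r => (G r).im) (nhdsWithin 0 (Set.Ioi 0)) (nhds Q.im) :=
        (Complex.continuous_im.tendsto Q).comp htend
      have h2 : Filter.Tendsto (fun r => (G r).re) (nhdsWithin 0 (Set.Ioi 0)) (nhds Q.re) :=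
        (Complex.continuous_re.tendsto Q).comp htend
      exact ge_of_tendsto h2 (hev.mono fun r hr => by simpa using (Complex.le_def.mp hr).1)
    have him : Q.im = 0 := by
      have h1 : Filter.Tendsto (fun r => (G r).im) (nhdsWithin 0 (Set.Ioi 0)) (nhds Q.im) :=
        (Complex.continuous_im.tendsto Q).comp htend
      have h2 : (fun r => (G r).im) =ᶠ[nhdsWithin (0:ℝ) (Set.Ioi 0)] (fun _ => (0:ℝ)) :=
        hev.mono fun r hr => by simpa using ((Complex.le_def.mp hr).2).symm
      exact tendsto_nhds_unique (h1.congr' h2) tendsto_const_nhds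
    rw [Complex.le_def]
    refine ⟨by simpa using hre, by simpa using him.symm⟩
end

section
/- Let d, m be positive integers and let C : ℝ^d × ℝ^d → Matrix (Fin m) (Fin m) ℂ satisfy C(x,y) = conjugate transpose of C(y,x) for all x,y. Then C is an m-variate positive definite function on ℝ^d if and only if for every r > 0 the function (x,y) ↦ sinh*(r C(x,y)), where sinh* denotes the componentwise (entrywise) hyperbolic sine, is an m-variate positive definite function on ℝ^d. -/
open scoped Matrix BigOperators ComplexOrder

open Finset in
lemma quadForm_expand {n m : ℕ} (K : Fin n → Fin n → Matrix (Fin m) (Fin m) ℂ)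
    (a : Fin n → Fin m → ℂ) :
    ∑ p, ∑ q, a p ⬝ᵥ (K p q).mulVec (star (a q)) =
      ∑ i : Fin n × Fin m, ∑ j : Fin n × Fin m,
        a i.1 i.2 * K i.1 j.1 i.2 j.2 * star (a j.1 j.2) := by
  simp only [dotProduct, Matrix.mulVec, Pi.star_apply, Fintype.sum_prod_type,
    Finset.mul_sum]
  refine Finset.sum_congr rfl fun p _ => ?_
  rw [Finset.sum_comm]
  refine sum_congr rfl fun j _ => sum_congr rfl fun q _ => sum_congr rfl fun k _ => by ring

open Finset in
lemma pow_entry_nonneg {ι : Type*} [Fintype ι] [DecidableEq ι] {M : Matrix ι ι ℂ}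
    (hM : M.PosSemidef) :
    ∀ (t : ℕ) (v : ι → ℂ), 0 ≤ ∑ i, ∑ j, v i * (M i j) ^ t * star (v j) := by
  intro t
  induction t with
  | zero =>
    intro v
    simp only [pow_zero, mul_one, ← Finset.mul_sum, ← Finset.sum_mul, ← star_sum]
    exact mul_star_self_nonneg _
  | succ t ih =>
    intro v
    open scoped MatrixOrder in obtain ⟨B, hB⟩ := CStarAlgebra.nonneg_iff_eq_star_mul_self.mp hM.nonneg
    have hentry : ∀ i j, M i j = ∑ s, star (B s i) * B s j := by
      intro i j
      rw [hB]
      simp [Matrix.star_eq_conjTranspose, Matrix.mul_apply, Matrix.conjTranspose_apply]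
    have hterm : ∀ i j, ∑ s, (v i * star (B s i)) * (M i j) ^ t * star (v j * star (B s j))
        = v i * (M i j) ^ (t + 1) * star (v j) := by
      intro i j
      rw [pow_succ, hentry i j, Finset.mul_sum, Finset.mul_sum, Finset.sum_mul]
      refine sum_congr rfl fun s _ => ?_
      simp only [star_mul, star_star]
      ring
    have key : ∑ i, ∑ j, v i * (M i j) ^ (t + 1) * star (v j)
        = ∑ s, ∑ i, ∑ j, (v i * star (B s i)) * (M i j) ^ t * star (v j * star (B s j)) := by
      calc ∑ i, ∑ j, v i * (M i j) ^ (t + 1) * star (v j)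
          = ∑ i, ∑ j, ∑ s, (v i * star (B s i)) * (M i j) ^ t * star (v j * star (B s j)) :=
            sum_congr rfl fun i _ => sum_congr rfl fun j _ => (hterm i j).symm
        _ = ∑ i, ∑ s, ∑ j, (v i * star (B s i)) * (M i j) ^ t * star (v j * star (B s j)) :=
            sum_congr rfl fun i _ => Finset.sum_comm
        _ = ∑ s, ∑ i, ∑ j, (v i * star (B s i)) * (M i j) ^ t * star (v j * star (B s j)) :=
            Finset.sum_comm
    rw [key]
    exact Finset.sum_nonneg fun s _ => ih (fun i => v i * star (B s i))

open Finset in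
lemma sinh_form_nonneg {ι : Type*} [Fintype ι] [DecidableEq ι] {M : Matrix ι ι ℂ}
    (hM : M.PosSemidef) {r : ℝ} (hr : 0 < r) (v : ι → ℂ) :
    0 ≤ ∑ i, ∑ j, v i * Complex.sinh (r * M i j) * star (v j) := by
  have hsum : ∀ i j : ι, HasSum
      (fun t : ℕ => v i * ((r * M i j) ^ (2 * t + 1) / ((2 * t + 1).factorial : ℂ)) * star (v j))
      (v i * Complex.sinh (r * M i j) * star (v j)) := fun i j =>
    ((Complex.hasSum_sinh ((r : ℂ) * M i j)).mul_left (v i)).mul_right (star (v j))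
  have hS : HasSum
      (fun t : ℕ => ∑ i, ∑ j,
        v i * ((r * M i j) ^ (2 * t + 1) / ((2 * t + 1).factorial : ℂ)) * star (v j))
      (∑ i, ∑ j, v i * Complex.sinh (r * M i j) * star (v j)) :=
    hasSum_sum fun i _ => hasSum_sum fun j _ => hsum i j
  rw [← hS.tsum_eq]
  refine tsum_nonneg fun t => ?_
  have key : ∑ i, ∑ j, v i * ((r * M i j) ^ (2 * t + 1) / ((2 * t + 1).factorial : ℂ)) * star (v j)
      = ((r ^ (2 * t + 1) / ((2 * t + 1).factorial : ℝ) : ℝ) : ℂ)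
        * ∑ i, ∑ j, v i * (M i j) ^ (2 * t + 1) * star (v j) := by
    rw [Finset.mul_sum]
    refine sum_congr rfl fun i _ => ?_
    rw [Finset.mul_sum]
    refine sum_congr rfl fun j _ => ?_
    push_cast
    ring
  rw [key]
  exact mul_nonneg (Complex.zero_le_real.mpr (by positivity)) (pow_entry_nonneg hM _ v)

/-- `C` is an `m`-variate positive definite function on `ℝ^d` iff for every `r > 0` the
componentwise hyperbolic sine `sinh*(rC)` is one. -/
theorem crossPosDef_iff_starSinh (d m : ℕ) (hd : 0 < d) (hm : 0 < m)
    (C : (Fin d → ℝ) → (Fin d → ℝ) → Matrix (Fin m) (Fin m) ℂ)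
    (hHerm : ∀ x y, C x y = (C y x)ᴴ) :
    IsCrossPosDef d m C ↔
      ∀ r : ℝ, 0 < r →
        IsCrossPosDef d m
          (fun x y => Matrix.of fun j k => Complex.sinh (r * C x y j k)) := by
  constructor
  · intro hC r hr
    constructor
    · intro x y
      ext j k
      simp only [Matrix.conjTranspose_apply, Matrix.of_apply]
      rw [hHerm x y]
      simp only [Matrix.conjTranspose_apply]
      simp only [Complex.star_def]
      rw [← Complex.sinh_conj, map_mul, Complex.conj_ofReal]
    · intro n x a
      rw [show (∑ p, ∑ q, a p ⬝ᵥ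
            ((fun x y => Matrix.of fun j k => Complex.sinh (r * C x y j k)) (x p) (x q)).mulVec
            (star (a q)))
          = ∑ p, ∑ q, a p ⬝ᵥ
            ((fun p q => Matrix.of fun j k => Complex.sinh (r * C (x p) (x q) j k)) p q).mulVec
            (star (a q)) from rfl,
        quadForm_expand]
      set M : Matrix (Fin n × Fin m) (Fin n × Fin m) ℂ :=
        Matrix.of fun i j => C (x i.1) (x j.1) i.2 j.2 with hMdef
      have hM : M.PosSemidef := by
        constructor
        · ext i j
          simp only [Matrix.conjTranspose_apply, hMdef, Matrix.of_apply]
          rw [hHerm (x i.1) (x j.1)]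
          simp [Matrix.conjTranspose_apply]
        · intro w
          have h0 := hC.2 n x (fun p j => star (w (p, j)))
          rw [quadForm_expand] at h0
          simpa [dotProduct, Matrix.mulVec, Finset.mul_sum, hMdef, Finsupp.sum_fintype,
            mul_comm, mul_left_comm, mul_assoc] using h0
      exact sinh_form_nonneg hM hr (fun i => a i.1 i.2)
  · intro h
    refine ⟨hHerm, ?_⟩
    intro n x a
    rw [quadForm_expand (fun p q => C (x p) (x q)) a]
    have key : ∀ z : ℂ, Filter.Tendsto (fun r : ℝ => r⁻¹ • Complex.sinh (r * z))
        (nhdsWithin (0 : ℝ) {0}ᶜ) (nhds z) := by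
      intro z
      have hd1 : HasDerivAt (fun r : ℝ => ((r : ℂ)) * z) z 0 := by
        simpa using (Complex.ofRealCLM.hasDerivAt (x := (0 : ℝ))).mul_const z
      have hd2 : HasDerivAt (fun r : ℝ => Complex.sinh ((r : ℂ) * z)) z 0 := by
        have := (Complex.hasDerivAt_sinh (((0 : ℝ) : ℂ) * z)).comp (0 : ℝ) hd1
        simp only [Complex.ofReal_zero, zero_mul, Complex.cosh_zero, one_mul] at this
        exact this
      have ht := hasDerivAt_iff_tendsto_slope.mp hd2
      refine ht.congr (fun r => ?_)
      simp [slope_def_module]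
    have hT : Filter.Tendsto
        (fun r : ℝ => ∑ i : Fin n × Fin m, ∑ j : Fin n × Fin m,
          a i.1 i.2 * (r⁻¹ • Complex.sinh (r * C (x i.1) (x j.1) i.2 j.2)) * star (a j.1 j.2))
        (nhdsWithin (0 : ℝ) {0}ᶜ)
        (nhds (∑ i : Fin n × Fin m, ∑ j : Fin n × Fin m,
          a i.1 i.2 * C (x i.1) (x j.1) i.2 j.2 * star (a j.1 j.2))) := by
      refine tendsto_finset_sum _ fun i _ => tendsto_finset_sum _ fun j _ => ?_
      exact ((key _).const_mul _).mul_const _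
    have hsub : Set.Ioi (0 : ℝ) ⊆ ({0}ᶜ : Set ℝ) := fun r hr =>
      Set.mem_compl_singleton_iff.mpr (ne_of_gt hr)
    have hT' := hT.mono_left (nhdsWithin_mono (0 : ℝ) hsub)
    refine ge_of_tendsto hT' ?_
    filter_upwards [self_mem_nhdsWithin] with r hr
    have h0 := (h r hr).2 n x a
    rw [show (∑ p, ∑ q, a p ⬝ᵥ
          ((fun x y => Matrix.of fun j k => Complex.sinh (r * C x y j k)) (x p) (x q)).mulVec
          (star (a q)))
        = ∑ p, ∑ q, a p ⬝ᵥ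
          ((fun p q => Matrix.of fun j k => Complex.sinh (r * C (x p) (x q) j k)) p q).mulVec
          (star (a q)) from rfl, quadForm_expand] at h0
    have hco : (0 : ℂ) ≤ ((r⁻¹ : ℝ) : ℂ) := Complex.zero_le_real.mpr (inv_nonneg.mpr hr.le)
    calc (0 : ℂ) ≤ ((r⁻¹ : ℝ) : ℂ) * ∑ i : Fin n × Fin m, ∑ j : Fin n × Fin m,
          a i.1 i.2 * Complex.sinh (r * C (x i.1) (x j.1) i.2 j.2) * star (a j.1 j.2) :=
        mul_nonneg hco h0
      _ = _ := by
        rw [Finset.mul_sum]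
        refine Finset.sum_congr rfl fun i _ => ?_
        rw [Finset.mul_sum]
        refine Finset.sum_congr rfl fun j _ => ?_
        rw [Complex.real_smul]
        ring
end

section
/- Let d, m be positive integers and let C : ℝ^d × ℝ^d → Matrix (Fin m) (Fin m) ℂ satisfy C(x,y) = conjugate transpose of C(y,x) for all x,y. Suppose that for every r > 0 the componentwise exponential (x,y) ↦ exp*(r C(x,y)) is an m-variate positive definite function on ℝ^d. Then for every z ∈ ℝ^d the function C^{(z)}(x,y) = C(z,z) − C(x,z) − C(z,y) + C(x,y) is an m-variate positive definite function on ℝ^d. -/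
open scoped Matrix BigOperators ComplexOrder

lemma sum_dotAux {m n : ℕ} (u : Fin n → Fin m → ℂ) (w : Fin m → ℂ) :
    (∑ p, u p) ⬝ᵥ w = ∑ p, u p ⬝ᵥ w := by
  simp [dotProduct, Finset.sum_apply, Finset.sum_mul]
  exact Finset.sum_comm

lemma dot_sumAux {m n : ℕ} (u : Fin m → ℂ) (M : Matrix (Fin m) (Fin m) ℂ)
    (w : Fin n → Fin m → ℂ) :
    u ⬝ᵥ M.mulVec (star (∑ q, w q)) = ∑ q, u ⬝ᵥ M.mulVec (star (w q)) := by
  simp only [dotProduct, Matrix.mulVec, Pi.star_apply, star_sum, Finset.sum_apply,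
    Finset.mul_sum, Finset.sum_mul]
  calc (∑ j : Fin m, ∑ k : Fin m, ∑ q : Fin n, u j * (M j k * star (w q k)))
      = ∑ j : Fin m, ∑ q : Fin n, ∑ k : Fin m, u j * (M j k * star (w q k)) :=
        Finset.sum_congr rfl fun j _ => Finset.sum_comm
    _ = ∑ q : Fin n, ∑ j : Fin m, ∑ k : Fin m, u j * (M j k * star (w q k)) := Finset.sum_comm

/-- Key lemma: if `exp*(rC)` is pos. def. for all `r > 0`, then the quadratic form of `C`
is nonnegative on vector families summing to zero. -/
lemma key_zero_sum {d m : ℕ}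
    (C : (Fin d → ℝ) → (Fin d → ℝ) → Matrix (Fin m) (Fin m) ℂ)
    (hexp : ∀ r : ℝ, 0 < r →
      IsCrossPosDef d m (fun x y => Matrix.of fun j k => Complex.exp (r * C x y j k)))
    (n : ℕ) (y : Fin n → (Fin d → ℝ)) (b : Fin n → (Fin m → ℂ))
    (hb : ∑ p, b p = 0) :
    0 ≤ ∑ p, ∑ q, b p ⬝ᵥ (C (y p) (y q)).mulVec (star (b q)) := by
  set g : ℂ → ℂ := fun ρ => ∑ p, ∑ q, ∑ j, ∑ k,
    b p j * (Complex.exp (ρ * C (y p) (y q) j k) * star (b q k)) with hg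
  set S : ℂ := ∑ p, ∑ q, ∑ j, ∑ k,
    b p j * (C (y p) (y q) j k * star (b q k)) with hS
  have htarget : (∑ p, ∑ q, b p ⬝ᵥ (C (y p) (y q)).mulVec (star (b q))) = S := by
    simp [hS, dotProduct, Matrix.mulVec, Finset.mul_sum]
  have hbj : ∀ j, (∑ p, b p j) = 0 := by
    intro j
    have := congrFun hb j
    simpa [Finset.sum_apply] using this
  have hpos : ∀ r : ℝ, 0 < r → 0 ≤ g r := by
    intro r hr
    have h := (hexp r hr).2 n y b
    simpa [hg, dotProduct, Matrix.mulVec, Finset.mul_sum] using h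
  have hg0 : g 0 = 0 := by
    have : g 0 = (∑ p, ∑ j, b p j) * (∑ q, ∑ k, star (b q k)) := by
      simp only [hg, zero_mul, Complex.exp_zero, one_mul]
      rw [Finset.sum_mul_sum]
      refine Finset.sum_congr rfl fun p _ => Finset.sum_congr rfl fun q _ => ?_
      exact (Finset.sum_mul_sum _ _ _ _).symm
    have h0 : (∑ p, ∑ j, b p j) = 0 := by
      rw [Finset.sum_comm]; simp [hbj]
    rw [this, h0, zero_mul]
  have hder : HasDerivAt g S 0 := by
    rw [hS]
    refine HasDerivAt.fun_sum fun p _ => HasDerivAt.fun_sum fun q _ =>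
      HasDerivAt.fun_sum fun j _ => HasDerivAt.fun_sum fun k _ => ?_
    have h := ((((hasDerivAt_id (0:ℂ)).mul_const (C (y p) (y q) j k)).cexp).mul_const
      (star (b q k))).const_mul (b p j)
    simpa [mul_assoc] using h
  have hslope : Filter.Tendsto (fun ρ : ℂ => g ρ / ρ) (nhdsWithin 0 {(0:ℂ)}ᶜ) (nhds S) := by
    have h := hasDerivAt_iff_tendsto_slope.mp hder
    refine h.congr fun ρ => ?_
    simp [slope_def_field, hg0]
  have hmap : Filter.Tendsto (fun r : ℝ => (r:ℂ)) (nhdsWithin 0 (Set.Ioi 0))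
      (nhdsWithin 0 {(0:ℂ)}ᶜ) := by
    refine tendsto_nhdsWithin_of_tendsto_nhds_of_eventually_within _ ?_ ?_
    · exact (Complex.continuous_ofReal.tendsto 0).mono_left nhdsWithin_le_nhds
    · filter_upwards [self_mem_nhdsWithin] with r hr
      exact Complex.ofReal_ne_zero.mpr (ne_of_gt hr)
  have H : Filter.Tendsto (fun r : ℝ => g r / r) (nhdsWithin 0 (Set.Ioi 0)) (nhds S) :=
    hslope.comp hmap
  have hev : ∀ᶠ (r : ℝ) in nhdsWithin (0:ℝ) (Set.Ioi 0),
      0 ≤ ((g r) / (r : ℂ)).re ∧ ((g r) / (r : ℂ)).im = 0 := by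
    filter_upwards [self_mem_nhdsWithin] with r hr
    have h1 := hpos r hr
    rw [Complex.le_def] at h1
    constructor
    · simp only [Complex.div_ofReal_re]
      exact div_nonneg (by simpa using h1.1) (le_of_lt hr)
    · simp only [Complex.div_ofReal_im]
      rw [← h1.2]
      simp
  have hre : 0 ≤ S.re := by
    refine ge_of_tendsto ((Complex.continuous_re.tendsto S).comp H) ?_
    filter_upwards [hev] with r hr using hr.1
  have him : S.im = 0 := by
    refine tendsto_nhds_unique ((Complex.continuous_im.tendsto S).comp H) ?_
    refine Filter.Tendsto.congr' ?_ tendsto_const_nhds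
    filter_upwards [hev] with r hr using hr.2.symm
  rw [htarget, Complex.le_def]
  exact ⟨by simpa using hre, by simp [him]⟩

/-- If the componentwise exponential `exp*(rC)` is an `m`-variate positive definite
function for every `r > 0`, then `C^{(z)}(x,y) = C(z,z) − C(x,z) − C(z,y) + C(x,y)`
is an `m`-variate positive definite function for every `z ∈ ℝ^d`. -/
theorem crossPosDef_of_starExp (d m : ℕ) (hd : 0 < d) (hm : 0 < m)
    (C : (Fin d → ℝ) → (Fin d → ℝ) → Matrix (Fin m) (Fin m) ℂ)
    (hHerm : ∀ x y, C x y = (C y x)ᴴ)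
    (hexp : ∀ r : ℝ, 0 < r →
      IsCrossPosDef d m (fun x y => Matrix.of fun j k => Complex.exp (r * C x y j k))) :
    ∀ z : Fin d → ℝ,
      IsCrossPosDef d m (fun x y => C z z - C x z - C z y + C x y) := by
  intro z
  constructor
  · intro x y
    rw [Matrix.conjTranspose_add, Matrix.conjTranspose_sub, Matrix.conjTranspose_sub,
      ← hHerm z z, ← hHerm x z, ← hHerm z y, ← hHerm x y]
    abel
  · intro n x a
    set A : Fin m → ℂ := ∑ p, a p with hA
    set b : Fin (n + 1) → Fin m → ℂ := Fin.snoc a (-A) with hbdef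
    set y : Fin (n + 1) → Fin d → ℝ := Fin.snoc x z with hydef
    have hb : ∑ p, b p = 0 := by
      rw [Fin.sum_univ_castSucc]
      simp [hbdef, hA]
    have hkey := key_zero_sum C hexp (n + 1) y b hb
    simp only [Fin.sum_univ_castSucc, hbdef, hydef, Fin.snoc_castSucc, Fin.snoc_last] at hkey
    simp only [star_neg, Matrix.mulVec_neg, dotProduct_neg, neg_dotProduct,
      Finset.sum_add_distrib, Finset.sum_neg_distrib] at hkey
    have e1 : (∑ p, ∑ q, a p ⬝ᵥ (C z z).mulVec (star (a q))) = A ⬝ᵥ (C z z).mulVec (star A) := by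
      rw [hA, sum_dotAux]
      exact Finset.sum_congr rfl fun p _ => (dot_sumAux _ _ _).symm
    have e2 : (∑ p, ∑ q, a p ⬝ᵥ (C (x p) z).mulVec (star (a q)))
        = ∑ p, a p ⬝ᵥ (C (x p) z).mulVec (star A) := by
      exact Finset.sum_congr rfl fun p _ => (dot_sumAux _ _ _).symm
    have e3 : (∑ p, ∑ q, a p ⬝ᵥ (C z (x q)).mulVec (star (a q)))
        = ∑ q, A ⬝ᵥ (C z (x q)).mulVec (star (a q)) := by
      rw [Finset.sum_comm]
      exact Finset.sum_congr rfl fun q _ => (sum_dotAux _ _).symm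
    calc (0:ℂ) ≤ _ := hkey
      _ = ∑ p, ∑ q, a p ⬝ᵥ (C z z - C (x p) z - C z (x q) + C (x p) (x q)).mulVec (star (a q)) := by
          simp only [Matrix.sub_mulVec, Matrix.add_mulVec, dotProduct_sub,
            dotProduct_add, Finset.sum_add_distrib, Finset.sum_sub_distrib, e1, e2, e3]
          ring
end

section
/- Let d be a positive integer and let C : ℝ^d × ℝ^d → ℂ satisfy C(x,y) = conj(C(y,x)) for all x,y. Suppose there exists z ∈ ℝ^d such that the function C^{(z)}(x,y) = C(z,z) − C(x,z) − C(z,y) + C(x,y) is a positive definite kernel on ℝ^d. Then for every r > 0 the function (x,y) ↦ exp(r C(x,y)) is a positive definite kernel on ℝ^d. -/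
open scoped BigOperators ComplexOrder

open ComplexConjugate

/-- The quadratic-form positivity condition for a finite kernel matrix. -/
def PosForm {n : ℕ} (M : Fin n → Fin n → ℂ) : Prop :=
  ∀ a : Fin n → ℂ, 0 ≤ ∑ p, ∑ q, a p * M p q * (starRingEnd ℂ) (a q)

lemma posForm_one {n : ℕ} : PosForm (fun (_ _ : Fin n) => (1 : ℂ)) := by
  intro a
  have : ∑ p, ∑ q, a p * (1:ℂ) * (starRingEnd ℂ) (a q)
      = (∑ p, a p) * star (∑ q, a q) := by
    rw [Finset.sum_mul]
    simp only [Finset.mul_sum, star_sum, mul_one]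
    rfl
  rw [this]
  exact mul_star_self_nonneg _

lemma posForm_mul {n : ℕ} {M N : Fin n → Fin n → ℂ}
    (hM : PosForm M) (hNh : ∀ p q, N p q = (starRingEnd ℂ) (N q p)) (hN : PosForm N) :
    PosForm (fun p q => M p q * N p q) := by
  intro a
  dsimp only
  -- N as a matrix is PSD
  have hpsd : (Matrix.of N).PosSemidef := by
    refine Matrix.PosSemidef.of_dotProduct_mulVec_nonneg ?_ ?_
    · ext p q
      simp only [Matrix.conjTranspose_apply, Matrix.of_apply, RCLike.star_def]
      exact (hNh p q).symm
    · intro v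
      have h := hN (star v)
      have : dotProduct (star v) ((Matrix.of N).mulVec v)
          = ∑ p, ∑ q, star (v p) * N p q * (starRingEnd ℂ) (star (v q)) := by
        simp [dotProduct, Matrix.mulVec, Finset.mul_sum, mul_assoc,
          mul_comm, mul_left_comm]
      rw [this]; exact h
  obtain ⟨m, v, hv⟩ := Matrix.posSemidef_iff_eq_sum_vecMulVec.mp hpsd
  set B : Fin m → Fin n → ℂ := fun k i => star (v k i) with hBdef
  have hNe : ∀ p q, N p q = ∑ k, (starRingEnd ℂ) (B k p) * B k q := by
    intro p q
    have := congrFun (congrFun hv p) q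
    simpa [B, Matrix.sum_apply, Matrix.vecMulVec_apply] using this
  calc ∑ p, ∑ q, a p * (M p q * N p q) * (starRingEnd ℂ) (a q)
      = ∑ p, ∑ q, ∑ k, (a p * (starRingEnd ℂ) (B k p)) * M p q *
          (starRingEnd ℂ) (a q * (starRingEnd ℂ) (B k q)) := by
        refine Finset.sum_congr rfl fun p _ => Finset.sum_congr rfl fun q _ => ?_
        rw [hNe]
        simp only [Finset.mul_sum, Finset.sum_mul, map_mul, RingHomCompTriple.comp_apply,
          RingHom.id_apply, starRingEnd_self_apply]
        exact Finset.sum_congr rfl fun k _ => by ring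
    _ = ∑ p, ∑ k, ∑ q, (a p * (starRingEnd ℂ) (B k p)) * M p q *
          (starRingEnd ℂ) (a q * (starRingEnd ℂ) (B k q)) :=
        Finset.sum_congr rfl fun p _ => Finset.sum_comm
    _ = ∑ k, ∑ p, ∑ q, (a p * (starRingEnd ℂ) (B k p)) * M p q *
          (starRingEnd ℂ) (a q * (starRingEnd ℂ) (B k q)) := Finset.sum_comm
    _ ≥ 0 := Finset.sum_nonneg fun k _ => hM (fun i => a i * (starRingEnd ℂ) (B k i))

lemma posForm_pow {n : ℕ} {M : Fin n → Fin n → ℂ}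
    (hMh : ∀ p q, M p q = (starRingEnd ℂ) (M q p)) (hM : PosForm M) :
    ∀ k : ℕ, PosForm (fun p q => M p q ^ k) := by
  intro k
  induction k with
  | zero => simpa using posForm_one
  | succ k ih =>
      have := posForm_mul ih hMh hM
      simpa [pow_succ] using this

lemma posForm_exp {n : ℕ} {M : Fin n → Fin n → ℂ}
    (hMh : ∀ p q, M p q = (starRingEnd ℂ) (M q p)) (hM : PosForm M) :
    PosForm (fun p q => Complex.exp (M p q)) := by
  intro a
  have hsum : ∀ p q : Fin n,
      Summable (fun k : ℕ => a p * (M p q ^ k / (k.factorial : ℂ)) * (starRingEnd ℂ) (a q)) := by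
    intro p q
    exact ((NormedSpace.expSeries_div_summable (M p q)).mul_left _).mul_right _
  have hexp : ∀ p q : Fin n, a p * Complex.exp (M p q) * (starRingEnd ℂ) (a q)
      = ∑' k : ℕ, a p * (M p q ^ k / (k.factorial : ℂ)) * (starRingEnd ℂ) (a q) := by
    intro p q
    rw [Complex.exp_eq_exp_ℂ, NormedSpace.exp_eq_tsum_div]
    rw [← tsum_mul_left, ← tsum_mul_right]
  calc (0:ℂ) ≤ ∑' k : ℕ, ∑ p, ∑ q,
        a p * (M p q ^ k / (k.factorial : ℂ)) * (starRingEnd ℂ) (a q) := by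
        refine tsum_nonneg fun k => ?_
        have h1 : ∑ p, ∑ q, a p * (M p q ^ k / (k.factorial : ℂ)) * (starRingEnd ℂ) (a q)
            = (((k.factorial : ℝ)⁻¹ : ℝ) : ℂ) *
              ∑ p, ∑ q, a p * (M p q ^ k) * (starRingEnd ℂ) (a q) := by
          push_cast
          simp only [Finset.mul_sum]
          refine Finset.sum_congr rfl fun p _ => Finset.sum_congr rfl fun q _ => ?_
          rw [div_eq_mul_inv]
          ring
        rw [h1]
        refine mul_nonneg ?_ (posForm_pow hMh hM k a)
        rw [Complex.zero_le_real]
        positivity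
    _ = ∑ p, ∑ q, a p * Complex.exp (M p q) * (starRingEnd ℂ) (a q) := by
        rw [show (∑' k : ℕ, ∑ p, ∑ q,
            a p * (M p q ^ k / (k.factorial : ℂ)) * (starRingEnd ℂ) (a q))
            = ∑ p, ∑ q, ∑' k : ℕ,
            a p * (M p q ^ k / (k.factorial : ℂ)) * (starRingEnd ℂ) (a q) from ?_]
        · exact Finset.sum_congr rfl fun p _ => Finset.sum_congr rfl fun q _ =>
            (hexp p q).symm
        · rw [Summable.tsum_finsetSum]
          · exact Finset.sum_congr rfl fun p _ => Summable.tsum_finsetSum fun q _ => hsum p q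
          · intro p _
            exact summable_sum fun q _ => hsum p q

/-- A (complex) positive definite kernel on `ℝ^d`. -/
def IsPDKernel (d : ℕ) (K : (Fin d → ℝ) → (Fin d → ℝ) → ℂ) : Prop :=
  (∀ x y, K x y = starRingEnd ℂ (K y x)) ∧
  ∀ (n : ℕ) (x : Fin n → (Fin d → ℝ)) (a : Fin n → ℂ),
    0 ≤ ∑ p, ∑ q, a p * K (x p) (x q) * starRingEnd ℂ (a q)

/-- If `C^{(z)}(x,y) = C(z,z) − C(x,z) − C(z,y) + C(x,y)` is a positive definite kernel
for some `z`, then `exp(rC)` is a positive definite kernel for every `r > 0`. -/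
theorem exp_pdKernel_of_shifted (d : ℕ) (hd : 0 < d)
    (C : (Fin d → ℝ) → (Fin d → ℝ) → ℂ)
    (hHerm : ∀ x y, C x y = starRingEnd ℂ (C y x))
    (hz : ∃ z : Fin d → ℝ,
      IsPDKernel d (fun x y => C z z - C x z - C z y + C x y)) :
    ∀ r : ℝ, 0 < r → IsPDKernel d (fun x y => Complex.exp (r * C x y)) := by
  intro r hr
  obtain ⟨z, hKh, hKpos⟩ := hz
  constructor
  · intro x y
    rw [← Complex.exp_conj, map_mul, Complex.conj_ofReal, ← hHerm]
  · intro n x a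
    set K : (Fin d → ℝ) → (Fin d → ℝ) → ℂ :=
      fun u v => C z z - C u z - C z v + C u v with hK
    set M : Fin n → Fin n → ℂ := fun p q => (r : ℂ) * K (x p) (x q) with hMdef
    have hMh : ∀ p q, M p q = (starRingEnd ℂ) (M q p) := by
      intro p q
      simp only [hMdef, map_mul, Complex.conj_ofReal]
      rw [← hKh]
    have hMpos : PosForm M := by
      intro b
      have h := hKpos n x b
      have : ∑ p, ∑ q, b p * M p q * (starRingEnd ℂ) (b q)
          = (r : ℂ) * ∑ p, ∑ q, b p * K (x p) (x q) * (starRingEnd ℂ) (b q) := by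
        simp only [Finset.mul_sum]
        exact Finset.sum_congr rfl fun p _ => Finset.sum_congr rfl fun q _ => by
          simp only [hMdef]; ring
      rw [this]
      refine mul_nonneg ?_ h
      rw [Complex.zero_le_real]
      exact hr.le
    have hE := posForm_exp hMh hMpos
    -- C z z is real
    have hzz : (starRingEnd ℂ) (C z z) = C z z := (hHerm z z).symm
    set c : ℂ := Complex.exp (-((r : ℂ) * C z z)) with hc
    have hcpos : 0 ≤ c := by
      have : ((C z z).re : ℂ) = C z z := Complex.conj_eq_iff_re.mp hzz
      rw [hc, ← this]
      rw [show -((r:ℂ) * ((C z z).re : ℂ)) = ((-(r * (C z z).re) : ℝ) : ℂ) by push_cast; ring]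
      rw [← Complex.ofReal_exp, Complex.zero_le_real]
      exact (Real.exp_pos _).le
    set b : Fin n → ℂ := fun p => a p * Complex.exp ((r : ℂ) * C (x p) z) with hb
    have hconj : ∀ u, (starRingEnd ℂ) (Complex.exp ((r : ℂ) * C u z))
        = Complex.exp ((r : ℂ) * C z u) := by
      intro u
      rw [← Complex.exp_conj, map_mul, Complex.conj_ofReal, ← hHerm]
    have key : ∀ p q, a p * Complex.exp ((r : ℂ) * C (x p) (x q)) * (starRingEnd ℂ) (a q)
        = c * (b p * Complex.exp (M p q) * (starRingEnd ℂ) (b q)) := by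
      intro p q
      simp only [hb, hc, hMdef, map_mul, hconj]
      rw [show (r:ℂ) * C (x p) (x q)
          = -((r:ℂ) * C z z) + (r:ℂ) * C (x p) z + (r:ℂ) * K (x p) (x q)
            + (r:ℂ) * C z (x q) by rw [hK]; ring]
      rw [Complex.exp_add, Complex.exp_add, Complex.exp_add]
      ring
    calc (0:ℂ) ≤ c * ∑ p, ∑ q, b p * Complex.exp (M p q) * (starRingEnd ℂ) (b q) :=
          mul_nonneg hcpos (hE b)
      _ = ∑ p, ∑ q, a p * Complex.exp ((r : ℂ) * C (x p) (x q)) * (starRingEnd ℂ) (a q) := by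
          simp only [Finset.mul_sum]
          exact Finset.sum_congr rfl fun p _ => Finset.sum_congr rfl fun q _ => (key p q).symm
end

section
/- Let d be a positive integer, let γ̃ be a variogram on ℝ^d, and let M ∈ Matrix (Fin 2) (Fin 2) ℝ be symmetric with M₁₁ = M₂₂ and M₁₁ > M₁₂. If the map (x,y) ↦ (exp(−M_{jk} · γ̃(x−y)))_{j,k=1,2} is a real 2-variate positive definite function on ℝ^d, then γ̃(h) = 0 for all h ∈ ℝ^d. -/
open scoped Matrix BigOperators

/-- A variogram on `ℝ^d`: vanishes at the origin, even, nonnegative, and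
conditionally negative definite. -/
def IsVariogram (d : ℕ) (γ : (Fin d → ℝ) → ℝ) : Prop :=
  γ 0 = 0 ∧ (∀ h, γ (-h) = γ h) ∧ (∀ h, 0 ≤ γ h) ∧
  ∀ (n : ℕ) (x : Fin n → (Fin d → ℝ)) (a : Fin n → ℝ), (∑ p, a p) = 0 →
    ∑ p, ∑ q, a p * a q * γ (x p - x q) ≤ 0

/-- A real `m`-variate positive definite function on `ℝ^d`. -/
def IsRealCrossPosDef (d m : ℕ)
    (C : (Fin d → ℝ) → (Fin d → ℝ) → Matrix (Fin m) (Fin m) ℝ) : Prop :=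
  (∀ x y, C x y = (C y x)ᵀ) ∧
  ∀ (n : ℕ) (x : Fin n → (Fin d → ℝ)) (a : Fin n → (Fin m → ℝ)),
    0 ≤ ∑ p, ∑ q, a p ⬝ᵥ (C (x p) (x q)).mulVec (a q)

/-- If `M` is a symmetric `2×2` matrix with identical diagonal entries and
`M₁₁ > M₁₂`, and the componentwise exponential `exp*(−M γ̃(x−y))` is a real `2`-variate
positive definite function, then the variogram `γ̃` vanishes identically. -/
theorem variogram_eq_zero_of_starExp_posDef (d : ℕ) (hd : 0 < d)
    (γ : (Fin d → ℝ) → ℝ) (hγ : IsVariogram d γ)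
    (M : Matrix (Fin 2) (Fin 2) ℝ) (hMsymm : M.IsSymm)
    (hdiag : M 0 0 = M 1 1) (hlt : M 0 1 < M 0 0)
    (hpd : IsRealCrossPosDef d 2
      (fun x y => Matrix.of fun j k => Real.exp (-(M j k * γ (x - y))))) :
    ∀ h : Fin d → ℝ, γ h = 0 := by

  obtain ⟨h0, heven, hnn, _⟩ := hγ
  intro h
  have hM10 : M 1 0 = M 0 1 := by
    have := hMsymm
    rw [Matrix.IsSymm] at this
    have := congrFun (congrFun this 0) 1
    simpa [Matrix.transpose_apply] using this
  have key := hpd.2 2 ![h, 0] ![![1, -1], ![1, -1]]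
  have hsub : h - (0 : Fin d → ℝ) = h := by simp
  have hsub' : (0 : Fin d → ℝ) - h = -h := by simp
  simp only [Fin.sum_univ_two, Matrix.cons_val_zero, Matrix.cons_val_one, Matrix.head_cons,
    Matrix.mulVec, dotProduct, Matrix.of_apply, hsub, hsub', heven, sub_self, h0] at key
  -- key : 0 ≤ ...
  have hexp : Real.exp (-(M 0 0 * γ h)) ≥ Real.exp (-(M 0 1 * γ h)) := by
    rw [hM10, ← hdiag] at key
    simp only [mul_zero, neg_zero, Real.exp_zero] at key
    linarith [key]
  have := Real.exp_le_exp.mp hexp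
  have hγh : γ h ≤ 0 := by nlinarith [this]
  linarith [hnn h]
end

section
/- Let d, m be positive integers, let V ∈ Matrix (Fin m) (Fin m) ℂ be unitary, let D₁,…,D_m : ℝ^d × ℝ^d → ℂ satisfy D_j(x,y) = conj(D_j(y,x)) for all x,y and j, and define C(x,y) = V · diag(D₁(x,y),…,D_m(x,y)) · V*, where V* is the conjugate transpose of V. Then the n-fold matrix power (x,y) ↦ C(x,y)^n is an m-variate positive definite function on ℝ^d for every n ∈ ℕ, n ≥ 1, if and only if each D_j, j = 1,…,m, is a positive definite kernel on ℝ^d. -/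
open scoped Matrix BigOperators ComplexOrder

lemma aux_triple_comm {α β γ : Type*} [Fintype α] [Fintype β] [Fintype γ] (f : α → β → γ → ℂ) :
    ∑ p, ∑ q, ∑ r, f p q r = ∑ r, ∑ p, ∑ q, f p q r := by
  rw [show (∑ p, ∑ q, ∑ r, f p q r) = ∑ p, ∑ r, ∑ q, f p q r from
    Finset.sum_congr rfl fun p _ => Finset.sum_comm]
  exact Finset.sum_comm


lemma aux_schur (N : ℕ) (M P : Matrix (Fin N) (Fin N) ℂ) (hM : M.PosSemidef) (hP : P.PosSemidef) :
    (Matrix.of fun p q => M p q * P p q).PosSemidef := by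
  obtain ⟨B, rfl⟩ : ∃ B : Matrix (Fin N) (Fin N) ℂ, M = Bᴴ * B := by
    open scoped MatrixOrder in
    obtain ⟨B, hB⟩ := CStarAlgebra.nonneg_iff_eq_star_mul_self.mp hM.nonneg
    exact ⟨B, hB⟩
  refine Matrix.PosSemidef.of_dotProduct_mulVec_nonneg ?_ ?_
  · ext p q
    simp only [Matrix.conjTranspose_apply, Matrix.of_apply, star_mul']
    rw [← Matrix.conjTranspose_apply (Bᴴ * B), hM.1,
      ← Matrix.conjTranspose_apply P, hP.1]
  · intro v
    have L : star v ⬝ᵥ (Matrix.of fun p q => (Bᴴ * B) p q * P p q).mulVec v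
        = ∑ p, ∑ q, ∑ r, star (v p) * star (B r p) * P p q * (B r q * v q) := by
      simp only [dotProduct, Matrix.mulVec, Matrix.mul_apply, Matrix.of_apply,
        Matrix.conjTranspose_apply, Pi.star_apply, Finset.mul_sum, Finset.sum_mul]
      refine Finset.sum_congr rfl fun p _ => Finset.sum_congr rfl fun q _ =>
        Finset.sum_congr rfl fun r _ => by ring
    have R : ∑ r, star (fun q => B r q * v q) ⬝ᵥ P.mulVec (fun q => B r q * v q)
        = ∑ r, ∑ p, ∑ q, star (v p) * star (B r p) * P p q * (B r q * v q) := by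
      refine Finset.sum_congr rfl fun r _ => ?_
      simp only [dotProduct, Matrix.mulVec, Pi.star_apply, Finset.mul_sum, star_mul']
      refine Finset.sum_congr rfl fun p _ => Finset.sum_congr rfl fun q _ => by ring
    rw [L, aux_triple_comm, ← R]
    exact Finset.sum_nonneg fun r _ => hP.dotProduct_mulVec_nonneg _

-- entrywise power PSD
lemma aux_powPSD (N : ℕ) (M : Matrix (Fin N) (Fin N) ℂ) (hM : M.PosSemidef) :
    ∀ n : ℕ, 1 ≤ n → (Matrix.of fun p q => M p q ^ n).PosSemidef := by
  intro n hn
  induction n with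
  | zero => omega
  | succ n ih =>
    rcases Nat.eq_zero_or_pos n with h | h
    · subst h
      have e : (Matrix.of fun p q => M p q ^ 1) = M := by
        ext p q; exact pow_one _
      rw [e]; exact hM
    · have hps := ih h
      have hsch := aux_schur N (Matrix.of fun p q => M p q ^ n) M hps hM
      have e : (Matrix.of fun p q => (Matrix.of fun p q => M p q ^ n) p q * M p q)
          = Matrix.of fun p q => M p q ^ (n + 1) := by
        ext p q; simp [pow_succ]
      rwa [e] at hsch

-- pow formula
lemma aux_powform (m : ℕ) (V : Matrix (Fin m) (Fin m) ℂ) (hV : V ∈ Matrix.unitaryGroup (Fin m) ℂ)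
    (f : Fin m → ℂ) (n : ℕ) :
    (V * Matrix.diagonal f * Vᴴ) ^ n = V * Matrix.diagonal (fun j => f j ^ n) * Vᴴ := by
  induction n with
  | zero =>
    simp only [pow_zero]
    have h1 : Matrix.diagonal (fun _ : Fin m => (1:ℂ)) = 1 := Matrix.diagonal_one
    rw [h1, mul_one]
    exact (Matrix.mem_unitaryGroup_iff.mp hV).symm
  | succ n ih =>
    have hVV : Vᴴ * V = 1 := Matrix.mem_unitaryGroup_iff'.mp hV
    rw [pow_succ, ih]
    calc V * Matrix.diagonal (fun j => f j ^ n) * Vᴴ * (V * Matrix.diagonal f * Vᴴ)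
        = V * Matrix.diagonal (fun j => f j ^ n) * (Vᴴ * V) * Matrix.diagonal f * Vᴴ := by
          noncomm_ring
      _ = V * (Matrix.diagonal (fun j => f j ^ n) * Matrix.diagonal f) * Vᴴ := by
          rw [hVV, mul_one]; noncomm_ring
      _ = V * Matrix.diagonal (fun j => f j ^ (n+1)) * Vᴴ := by
          rw [Matrix.diagonal_mul_diagonal]
          have h2 : (fun j => f j ^ n * f j) = fun j => f j ^ (n+1) :=
            funext fun j => (pow_succ _ _).symm
          rw [h2]

-- expansion lemma
lemma aux_expand (m : ℕ) (V : Matrix (Fin m) (Fin m) ℂ) (f : Fin m → ℂ) (a b : Fin m → ℂ) :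
    a ⬝ᵥ (V * Matrix.diagonal f * Vᴴ).mulVec (star b)
      = ∑ j, (Matrix.vecMul a V) j * f j * starRingEnd ℂ ((Matrix.vecMul b V) j) := by
  rw [Matrix.dotProduct_mulVec, ← Matrix.vecMul_vecMul, ← Matrix.vecMul_vecMul,
    ← Matrix.dotProduct_mulVec, Matrix.mulVec_conjTranspose, star_star]
  simp only [dotProduct, Matrix.vecMul_diagonal, Pi.star_apply]
  exact Finset.sum_congr rfl fun j _ => rfl

-- kernel matrix PSD
lemma aux_kernelPSD (d N : ℕ) (K : (Fin d → ℝ) → (Fin d → ℝ) → ℂ)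
    (hK : (∀ x y, K x y = starRingEnd ℂ (K y x)) ∧
      ∀ (n : ℕ) (x : Fin n → (Fin d → ℝ)) (a : Fin n → ℂ),
        0 ≤ ∑ p, ∑ q, a p * K (x p) (x q) * starRingEnd ℂ (a q))
    (x : Fin N → (Fin d → ℝ)) :
    (Matrix.of fun p q => K (x p) (x q)).PosSemidef := by
  refine Matrix.PosSemidef.of_dotProduct_mulVec_nonneg ?_ ?_
  · ext p q
    simp only [Matrix.conjTranspose_apply, Matrix.of_apply]
    exact (hK.1 _ _).symm
  · intro v
    have := hK.2 N x (star v)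
    convert this using 1
    simp only [dotProduct, Matrix.mulVec, Matrix.of_apply, Pi.star_apply,
      Finset.mul_sum, star_star]
    exact Finset.sum_congr rfl fun p _ => Finset.sum_congr rfl fun q _ => by
      simp [mul_comm, mul_assoc]; ring

-- quadratic form nonneg from PSD
lemma aux_quadform (N : ℕ) (M : Matrix (Fin N) (Fin N) ℂ) (hM : M.PosSemidef) (b : Fin N → ℂ) :
    0 ≤ ∑ p, ∑ q, b p * M p q * starRingEnd ℂ (b q) := by
  have := hM.dotProduct_mulVec_nonneg (star b)
  convert this using 1
  simp only [dotProduct, Matrix.mulVec, Pi.star_apply, star_star, Finset.mul_sum]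
  exact Finset.sum_congr rfl fun p _ => Finset.sum_congr rfl fun q _ => by
    rw [starRingEnd_apply]; ring

/-- For `C(x,y) = V diag(D₁(x,y),…,D_m(x,y)) V*` with `V` unitary, the `n`-fold
matrix power `C(x,y)^n` is an `m`-variate positive definite function for every
`n ≥ 1` iff all the `D_j` are positive definite kernels. -/
theorem matrixPow_crossPosDef_iff (d m : ℕ) (hd : 0 < d) (hm : 0 < m)
    (V : Matrix (Fin m) (Fin m) ℂ) (hV : V ∈ Matrix.unitaryGroup (Fin m) ℂ)
    (D : Fin m → (Fin d → ℝ) → (Fin d → ℝ) → ℂ)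
    (hD : ∀ j x y, D j x y = starRingEnd ℂ (D j y x))
    (C : (Fin d → ℝ) → (Fin d → ℝ) → Matrix (Fin m) (Fin m) ℂ)
    (hC : ∀ x y, C x y = V * Matrix.diagonal (fun j => D j x y) * Vᴴ) :
    (∀ n : ℕ, 1 ≤ n → IsCrossPosDef d m (fun x y => (C x y) ^ n)) ↔
      ∀ j, IsPDKernel d (D j) := by
  have hVV : Vᴴ * V = 1 := Matrix.mem_unitaryGroup_iff'.mp hV
  constructor
  · intro h j
    refine ⟨hD j, ?_⟩
    intro N x α
    have h1 := (h 1 le_rfl).2 N x (fun p => fun i => α p * starRingEnd ℂ (V i j))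
    have hb : ∀ (c : ℂ), Matrix.vecMul (fun i => c * starRingEnd ℂ (V i j)) V
        = fun j' => c * (1 : Matrix (Fin m) (Fin m) ℂ) j j' := by
      intro c; funext j'
      rw [← hVV]
      simp only [Matrix.vecMul, dotProduct, Matrix.mul_apply,
        Matrix.conjTranspose_apply, Finset.mul_sum, starRingEnd_apply]
      exact Finset.sum_congr rfl fun i _ => by ring
    have key : ∀ p q, (fun i => α p * starRingEnd ℂ (V i j)) ⬝ᵥ
          ((C (x p) (x q)) ^ 1).mulVec (star (fun i => α q * starRingEnd ℂ (V i j)))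
        = α p * D j (x p) (x q) * starRingEnd ℂ (α q) := by
      intro p q
      rw [pow_one, hC, aux_expand, hb, hb]
      rw [Finset.sum_eq_single j]
      · simp [Matrix.one_apply]
      · intro j' _ hj'
        simp [Matrix.one_apply, Ne.symm hj']
      · intro hj; exact absurd (Finset.mem_univ j) hj
    calc (0:ℂ) ≤ ∑ p, ∑ q, (fun i => α p * starRingEnd ℂ (V i j)) ⬝ᵥ
          ((C (x p) (x q)) ^ 1).mulVec (star (fun i => α q * starRingEnd ℂ (V i j))) := h1
      _ = ∑ p, ∑ q, α p * D j (x p) (x q) * starRingEnd ℂ (α q) :=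
          Finset.sum_congr rfl fun p _ => Finset.sum_congr rfl fun q _ => key p q
  · intro h n hn
    constructor
    · intro x y
      have hf : star (fun j => D j y x) = fun j => D j x y := by
        funext j
        rw [Pi.star_apply, ← starRingEnd_apply]
        exact (hD j x y).symm
      have hsym : C x y = (C y x)ᴴ := by
        rw [hC x y, hC y x, Matrix.conjTranspose_mul, Matrix.conjTranspose_mul,
          Matrix.conjTranspose_conjTranspose, Matrix.diagonal_conjTranspose, hf,
          Matrix.mul_assoc]
      simp only
      rw [hsym, Matrix.conjTranspose_pow]
    · intro N x a
      have key : ∀ p q, a p ⬝ᵥ ((C (x p) (x q)) ^ n).mulVec (star (a q))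
          = ∑ j, (Matrix.vecMul (a p) V) j * (D j (x p) (x q)) ^ n
              * starRingEnd ℂ ((Matrix.vecMul (a q) V) j) := by
        intro p q
        rw [hC, aux_powform m V hV, aux_expand]
      calc (0:ℂ) ≤ ∑ j, ∑ p, ∑ q, (Matrix.vecMul (a p) V) j * (D j (x p) (x q)) ^ n
              * starRingEnd ℂ ((Matrix.vecMul (a q) V) j) := by
            refine Finset.sum_nonneg fun j _ => ?_
            have hps := aux_powPSD N (Matrix.of fun p q => D j (x p) (x q))
              (aux_kernelPSD d N (D j) (h j) x) n hn
            have := aux_quadform N _ hps (fun p => (Matrix.vecMul (a p) V) j)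
            simpa using this
        _ = ∑ p, ∑ q, ∑ j, (Matrix.vecMul (a p) V) j * (D j (x p) (x q)) ^ n
              * starRingEnd ℂ ((Matrix.vecMul (a q) V) j) := (aux_triple_comm _).symm
        _ = ∑ p, ∑ q, a p ⬝ᵥ ((C (x p) (x q)) ^ n).mulVec (star (a q)) :=
            Finset.sum_congr rfl fun p _ => Finset.sum_congr rfl fun q _ => (key p q).symm
end

section
/- Let d, l, m be positive integers, let F be a finite nonnegative Borel measure on ℝ^l, and let f : ℝ^l × ℝ^d × ℝ^d → Matrix (Fin m) (Fin m) ℂ be such that for all y₁, y₂ ∈ ℝ^d and j,k the map ω ↦ f(ω, y₁, y₂)_{jk} is measurable and F-integrable, and for F-almost every ω ∈ ℝ^l the map (y₁,y₂) ↦ f(ω, y₁, y₂) is an m-variate positive definite function on ℝ^d. Then the function K on (ℝ^l × ℝ^d) × (ℝ^l × ℝ^d) defined componentwise by K((x₁,y₁),(x₂,y₂))_{jk} = ∫_{ℝ^l} exp(−i ⟨x₁ − x₂, ω⟩) f(ω, y₁, y₂)_{jk} dF(ω), where ⟨·,·⟩ is the Euclidean inner product on ℝ^l, is an m-variate positive definite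 function on ℝ^{l+d} = ℝ^l × ℝ^d. -/
open scoped Matrix BigOperators ComplexOrder
open MeasureTheory

/-- An `m`-variate positive definite function (cross covariance function) on `E`. -/
def IsCrossPosDefOn {E : Type*} (m : ℕ) (C : E → E → Matrix (Fin m) (Fin m) ℂ) : Prop :=
  (∀ x y, C x y = (C y x)ᴴ) ∧
  ∀ (n : ℕ) (x : Fin n → E) (a : Fin n → (Fin m → ℂ)),
    0 ≤ ∑ p, ∑ q, a p ⬝ᵥ (C (x p) (x q)).mulVec (star (a q))

private lemma complex_integral_nonneg {α : Type*} [MeasurableSpace α] {μ : Measure α}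
    {g : α → ℂ} (hg : Integrable g μ) (h : ∀ᵐ x ∂μ, 0 ≤ g x) : 0 ≤ ∫ x, g x ∂μ := by
  rw [Complex.le_def]
  constructor
  · have h1 := integral_re hg
    simp only [RCLike.re_to_complex] at h1
    rw [Complex.zero_re, ← h1]
    apply integral_nonneg_of_ae
    filter_upwards [h] with x hx
    exact (Complex.le_def.mp hx).1
  · have h1 := integral_im hg
    simp only [RCLike.im_to_complex] at h1
    rw [Complex.zero_im, ← h1]
    rw [show (0 : ℝ) = ∫ _x, (0 : ℝ) ∂μ by simp]
    refine integral_congr_ae ?_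
    filter_upwards [h] with x hx
    simpa using (Complex.le_def.mp hx).2

/-- If `f(ω,·,·)` is an `m`-variate positive definite function on `ℝ^d` for
`F`-almost every `ω ∈ ℝ^l` (with each entry measurable and `F`-integrable, `F` a
finite measure), then
`K((x₁,y₁),(x₂,y₂))_{jk} = ∫ exp(−i⟨x₁−x₂,ω⟩) f(ω,y₁,y₂)_{jk} dF(ω)`
is an `m`-variate positive definite function on `ℝ^l × ℝ^d`. -/
theorem fourier_mixture_crossPosDef (d l m : ℕ) (hd : 0 < d) (hl : 0 < l) (hm : 0 < m)
    (F : Measure (Fin l → ℝ)) [IsFiniteMeasure F]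
    (f : (Fin l → ℝ) → (Fin d → ℝ) → (Fin d → ℝ) → Matrix (Fin m) (Fin m) ℂ)
    (hmeas : ∀ (y₁ y₂ : Fin d → ℝ) (j k : Fin m),
      Measurable (fun ω => f ω y₁ y₂ j k))
    (hint : ∀ (y₁ y₂ : Fin d → ℝ) (j k : Fin m),
      Integrable (fun ω => f ω y₁ y₂ j k) F)
    (hpd : ∀ᵐ ω ∂F, IsCrossPosDefOn m (fun y₁ y₂ => f ω y₁ y₂)) :
    IsCrossPosDefOn m
      (fun p₁ p₂ : (Fin l → ℝ) × (Fin d → ℝ) => Matrix.of fun j k =>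
        ∫ ω, Complex.exp (-Complex.I * (∑ i, ((p₁.1 i - p₂.1 i) * ω i) : ℝ)) *
          f ω p₁.2 p₂.2 j k ∂F) := by
  constructor
  · -- Hermitian symmetry
    intro x y
    ext j k
    simp only [Matrix.conjTranspose_apply, Matrix.of_apply, RCLike.star_def]
    rw [← integral_conj]
    refine integral_congr_ae ?_
    filter_upwards [hpd] with ω hω
    have hH : f ω x.2 y.2 j k = (starRingEnd ℂ) (f ω y.2 x.2 k j) := by
      have h0 : f ω x.2 y.2 = (f ω y.2 x.2)ᴴ := hω.1 x.2 y.2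
      rw [h0, Matrix.conjTranspose_apply, RCLike.star_def]
    rw [hH, map_mul, ← Complex.exp_conj]
    congr 2
    have hs : (∑ i, ((x.1 i - y.1 i) * ω i) : ℝ) = -(∑ i, ((y.1 i - x.1 i) * ω i) : ℝ) := by
      rw [← Finset.sum_neg_distrib]
      exact Finset.sum_congr rfl fun i _ => by ring
    rw [hs]
    simp [Complex.conj_I]
  · -- positivity
    intro n x a
    set e : Fin n → (Fin l → ℝ) → ℂ :=
      fun p ω => Complex.exp (-Complex.I * (∑ i, ((x p).1 i * ω i) : ℝ)) with he
    have hme : ∀ p, Measurable (e p) := by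
      intro p
      apply Complex.measurable_exp.comp
      apply Measurable.const_mul
      apply Complex.measurable_ofReal.comp
      exact Finset.measurable_sum _ fun i _ => (measurable_pi_apply i).const_mul _
    have hnorm : ∀ p ω, ‖e p ω‖ = 1 := by
      intro p ω
      simp [he, Complex.norm_exp]
    have hphase : ∀ p q ω,
        Complex.exp (-Complex.I * (∑ i, (((x p).1 i - (x q).1 i) * ω i) : ℝ)) =
          e p ω * (starRingEnd ℂ) (e q ω) := by
      intro p q ω
      rw [he]
      rw [← Complex.exp_conj, ← Complex.exp_add]
      congr 1
      rw [map_mul, map_neg, Complex.conj_I, Complex.conj_ofReal]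
      push_cast [Finset.sum_sub_distrib, sub_mul]
      ring
    -- the full integrand
    set G : Fin n → Fin n → Fin m → Fin m → (Fin l → ℝ) → ℂ :=
      fun p q j k ω => (e p ω * a p j) *
        (f ω (x p).2 (x q).2 j k * (starRingEnd ℂ) (e q ω * a q k)) with hG
    have hGint : ∀ p q j k, Integrable (G p q j k) F := by
      intro p q j k
      have h1 : Integrable (fun ω => (e p ω * (starRingEnd ℂ) (e q ω)) *
          f ω (x p).2 (x q).2 j k) F := by
        refine (hint _ _ j k).bdd_mul (c := 1) ?_ (Filter.Eventually.of_forall fun ω => ?_)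
        · exact ((hme p).mul (continuous_star.measurable.comp (hme q))).aestronglyMeasurable
        · rw [norm_mul, hnorm, RCLike.norm_conj, hnorm]; norm_num
      have h2 := h1.const_mul (a p j * (starRingEnd ℂ) (a q k))
      refine h2.congr ?_
      filter_upwards with ω
      rw [hG]
      simp only [map_mul]
      ring
    have key : ∀ p q,
        a p ⬝ᵥ ((Matrix.of fun j k =>
          ∫ ω, Complex.exp (-Complex.I * (∑ i, (((x p).1 i - (x q).1 i) * ω i) : ℝ)) *
            f ω (x p).2 (x q).2 j k ∂F).mulVec (star (a q))) =
        ∑ j, ∑ k, ∫ ω, G p q j k ω ∂F := by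
      intro p q
      simp only [dotProduct, Matrix.mulVec, Matrix.of_apply, Pi.star_apply,
        Finset.mul_sum]
      refine Finset.sum_congr rfl fun j _ => Finset.sum_congr rfl fun k _ => ?_
      have : ∀ (z : ℂ), a p j * (z * star (a q k)) = z * (a p j * (starRingEnd ℂ) (a q k)) := by
        intro z; simp [Complex.star_def]; ring
      rw [this, ← integral_mul_const]
      refine integral_congr_ae ?_
      filter_upwards with ω
      rw [hphase, hG]
      simp only [map_mul]
      ring
    simp only [key]
    have hswap : ∑ p, ∑ q, ∑ j, ∑ k, ∫ ω, G p q j k ω ∂F =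
        ∫ ω, ∑ p, ∑ q, ∑ j, ∑ k, G p q j k ω ∂F := by
      rw [integral_finset_sum _ (fun p _ => integrable_finset_sum _
        (fun q _ => integrable_finset_sum _ (fun j _ => integrable_finset_sum _
          (fun k _ => hGint p q j k))))]
      refine Finset.sum_congr rfl fun p _ => ?_
      rw [integral_finset_sum _ (fun q _ => integrable_finset_sum _
        (fun j _ => integrable_finset_sum _ (fun k _ => hGint p q j k)))]
      refine Finset.sum_congr rfl fun q _ => ?_
      rw [integral_finset_sum _ (fun j _ => integrable_finset_sum _
        (fun k _ => hGint p q j k))]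
      exact Finset.sum_congr rfl fun j _ =>
        (integral_finset_sum _ fun k _ => hGint p q j k).symm
    rw [hswap]
    refine complex_integral_nonneg ?_ ?_
    · exact integrable_finset_sum _ (fun p _ => integrable_finset_sum _
        (fun q _ => integrable_finset_sum _ (fun j _ => integrable_finset_sum _
          (fun k _ => hGint p q j k))))
    · filter_upwards [hpd] with ω hω
      have h := hω.2 n (fun p => (x p).2) (fun p j => e p ω * a p j)
      refine le_of_le_of_eq h ?_
      refine Finset.sum_congr rfl fun p _ => Finset.sum_congr rfl fun q _ => ?_
      simp only [dotProduct, Matrix.mulVec, Pi.star_apply, Finset.mul_sum, hG,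
        Complex.star_def]
end

section
/- Let d be a positive integer, φ a normal scale mixture, and f : ℝ^d → Matrix (Fin d) (Fin d) ℝ a function such that f(x) is symmetric and strictly positive definite (vᵀ f(x) v > 0 for all v ≠ 0) for every x ∈ ℝ^d. Then the function C(x,y) = φ( √( (x − y)ᵀ (f(x) + f(y))⁻¹ (x − y) ) ) / √( det(f(x) + f(y)) ) is a real positive definite kernel on ℝ^d (a covariance function). -/
open scoped Matrix BigOperators
open MeasureTheory Complex
open scoped Real

/-- `φ` is a normal scale mixture: `φ(t) = ∫ exp(−a t²) dF(a)` for a finite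
nonnegative Borel measure `F` on `[0,∞)`. -/
def IsNormalScaleMixture (φ : ℝ → ℝ) : Prop :=
  ∃ F : Measure ℝ, IsFiniteMeasure F ∧ F (Set.Iio 0) = 0 ∧
    ∀ t : ℝ, 0 ≤ t → φ t = ∫ a, Real.exp (-(a * t ^ 2)) ∂F

/-- A real positive definite kernel (covariance function) on `ℝ^d`. -/
def IsRealPDKernel (d : ℕ) (K : (Fin d → ℝ) → (Fin d → ℝ) → ℝ) : Prop :=
  (∀ x y, K x y = K y x) ∧
  ∀ (n : ℕ) (x : Fin n → (Fin d → ℝ)) (a : Fin n → ℝ),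
    0 ≤ ∑ p, ∑ q, a p * a q * K (x p) (x q)


section SteinAux


lemma aux_comp_mulVec {d : ℕ} (M : Matrix (Fin d) (Fin d) ℝ) (hM : M.det ≠ 0)
    (g : (Fin d → ℝ) → ℂ) (hg : AEStronglyMeasurable g (volume : Measure (Fin d → ℝ))) :
    ((Integrable fun w => g (M.mulVec w)) ↔ Integrable g) ∧
      (∫ w, g (M.mulVec w)) = |M.det|⁻¹ • ∫ v, g v := by
  have hdet : LinearMap.det (Matrix.toLin' M) ≠ 0 := by rwa [LinearMap.det_toLin']
  have hmap := Measure.map_linearMap_addHaar_eq_smul_addHaar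
    (volume : Measure (Fin d → ℝ)) hdet
  rw [LinearMap.det_toLin'] at hmap
  have hmeas : Measurable (Matrix.toLin' M) :=
    (Matrix.toLin' M).continuous_of_finiteDimensional.measurable
  have hsm : AEStronglyMeasurable g (Measure.map (Matrix.toLin' M) volume) := by
    rw [hmap]; exact hg.smul_measure _
  have heq : ∀ w, (Matrix.toLin' M) w = M.mulVec w := fun w => Matrix.toLin'_apply M w
  constructor
  · have : (fun w => g (M.mulVec w)) = g ∘ (Matrix.toLin' M) := by
      funext w; simp [heq]
    rw [this, ← integrable_map_measure hsm hmeas.aemeasurable, hmap,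
      integrable_smul_measure (by simp [hM]) (by simp)]
  · rw [show (fun w => g (M.mulVec w)) = fun w => g ((Matrix.toLin' M) w) by
      funext w; rw [heq],
      ← integral_map hmeas.aemeasurable hsm, hmap, integral_smul_measure]
    simp [ENNReal.toReal_ofReal, abs_nonneg, abs_inv]

lemma aux_gauss {d : ℕ} {S : Matrix (Fin d) (Fin d) ℝ} (hS : S.PosDef) (u : Fin d → ℝ)
    (r : ℝ) :
    (Integrable fun w : Fin d → ℝ =>
        cexp (Complex.I * r * ((u ⬝ᵥ w : ℝ) : ℂ) - ((w ⬝ᵥ S.mulVec w : ℝ) : ℂ))) ∧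
      (∫ w : Fin d → ℝ,
          cexp (Complex.I * r * ((u ⬝ᵥ w : ℝ) : ℂ) - ((w ⬝ᵥ S.mulVec w : ℝ) : ℂ))) =
        ((π ^ (d / 2 : ℝ) * Real.exp (-(r ^ 2 / 4 * (u ⬝ᵥ S⁻¹.mulVec u))) /
            Real.sqrt S.det : ℝ) : ℂ) := by
  classical
  set g : (Fin d → ℝ) → ℂ := fun w =>
    cexp (Complex.I * r * ((u ⬝ᵥ w : ℝ) : ℂ) - ((w ⬝ᵥ S.mulVec w : ℝ) : ℂ)) with hg_def
  -- matrix square root facts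
  obtain ⟨R, hRs, hRR⟩ : ∃ R : Matrix (Fin d) (Fin d) ℝ, R.PosSemidef ∧ R * R = S := by
    open scoped MatrixOrder in
    exact ⟨CFC.sqrt S, Matrix.nonneg_iff_posSemidef.mp (CFC.sqrt_nonneg S),
      CFC.sqrt_mul_sqrt_self S hS.posSemidef.nonneg⟩
  have hdetS : 0 < S.det := hS.det_pos
  have hdetR_sq : R.det * R.det = S.det := by rw [← Matrix.det_mul, hRR]
  have hdetR_nonneg : 0 ≤ R.det := by
    rw [hRs.isHermitian.det_eq_prod_eigenvalues]
    exact Finset.prod_nonneg fun i _ => hRs.eigenvalues_nonneg i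
  have hdetR_pos : 0 < R.det := by
    rcases hdetR_nonneg.lt_or_eq with h | h
    · exact h
    · exfalso; rw [← h] at hdetR_sq; simp at hdetR_sq; linarith [hdetR_sq ▸ hdetS]
  have hdetR_ne : R.det ≠ 0 := ne_of_gt hdetR_pos
  have hu : IsUnit R.det := isUnit_iff_ne_zero.mpr hdetR_ne
  have hdetR : R.det = Real.sqrt S.det := by
    rw [← hdetR_sq, Real.sqrt_mul_self hdetR_nonneg]
  have hRsymm : Rᵀ = R := by
    have := hRs.isHermitian
    rwa [Matrix.IsHermitian, Matrix.conjTranspose_eq_transpose_of_trivial] at this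
  set N := R⁻¹ with hN_def
  have hNsymm : Nᵀ = N := by rw [hN_def, Matrix.transpose_nonsing_inv, hRsymm]
  have hdetN : N.det = (R.det)⁻¹ := by
    rw [hN_def, Matrix.det_nonsing_inv, Ring.inverse_eq_inv]
  have hdetN_ne : N.det ≠ 0 := by rw [hdetN]; exact inv_ne_zero hdetR_ne
  have h1 : N * R = 1 := Matrix.nonsing_inv_mul R hu
  have h2 : R * N = 1 := Matrix.mul_nonsing_inv R hu
  have hNSN : N * S * N = 1 := by
    rw [← hRR, ← mul_assoc, h1, one_mul, h2]
  have hNN : N * N = S⁻¹ := by rw [hN_def, ← Matrix.mul_inv_rev, hRR]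
  have hSsymm : Sᵀ = S := by
    have := hS.isHermitian
    rwa [Matrix.IsHermitian, Matrix.conjTranspose_eq_transpose_of_trivial] at this
  -- continuity
  have c1 : Continuous fun w : Fin d → ℝ => u ⬝ᵥ w := by
    simp only [dotProduct]
    exact continuous_finset_sum _ fun i _ => continuous_const.mul (continuous_apply i)
  have c2 : Continuous fun w : Fin d → ℝ => w ⬝ᵥ S.mulVec w := by
    simp only [dotProduct, Matrix.mulVec]
    refine continuous_finset_sum _ fun i _ => (continuous_apply i).mul ?_
    exact continuous_finset_sum _ fun j _ => continuous_const.mul (continuous_apply j)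
  have hg_cont : Continuous g := by
    apply Complex.continuous_exp.comp
    exact ((continuous_const.mul (Complex.continuous_ofReal.comp c1)).sub
      (Complex.continuous_ofReal.comp c2))
  -- algebraic identities for the change of variables
  have key1 : ∀ v, u ⬝ᵥ (N *ᵥ v) = (N *ᵥ u) ⬝ᵥ v := fun v => by
    rw [Matrix.dotProduct_mulVec, ← Matrix.mulVec_transpose, hNsymm]
  have key2 : ∀ v : Fin d → ℝ, (N *ᵥ v) ⬝ᵥ (S *ᵥ (N *ᵥ v)) = v ⬝ᵥ v := fun v => by
    rw [Matrix.mulVec_mulVec, Matrix.dotProduct_mulVec, ← Matrix.mulVec_transpose,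
      Matrix.transpose_mul, hNsymm, hSsymm, Matrix.mulVec_mulVec, hNSN,
      Matrix.one_mulVec]
  have key3 : (N *ᵥ u) ⬝ᵥ (N *ᵥ u) = u ⬝ᵥ S⁻¹.mulVec u := by
    rw [Matrix.dotProduct_mulVec, ← Matrix.mulVec_transpose, hNsymm,
      Matrix.mulVec_mulVec, hNN]
    exact dotProduct_comm _ _
  set c : Fin d → ℂ := fun i => Complex.I * r * ((N *ᵥ u) i : ℂ) with hc_def
  have hb : (0:ℝ) < (1:ℂ).re := by simp
  have heu_int := GaussianFourier.integrable_cexp_neg_mul_sum_add (b := 1) hb c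
  have heu_val := GaussianFourier.integral_cexp_neg_mul_sum_add (b := 1) hb c
  have pointwise : ∀ v : Fin d → ℝ,
      g (N *ᵥ v) = cexp (-1 * ∑ i, (v i : ℂ) ^ 2 + ∑ i, c i * v i) := by
    intro v
    rw [hg_def]
    simp only
    rw [key1 v, key2 v]
    congr 1
    have e1 : ((v ⬝ᵥ v : ℝ) : ℂ) = ∑ i, (v i : ℂ) ^ 2 := by
      push_cast [dotProduct]
      exact Finset.sum_congr rfl fun i _ => (sq (v i : ℂ)).symm ▸ by ring
    have e2 : (((N *ᵥ u) ⬝ᵥ v : ℝ) : ℂ) = ∑ i, ((N *ᵥ u) i : ℂ) * v i := by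
      push_cast [dotProduct]; rfl
    rw [e1, e2, hc_def]
    simp only [Finset.mul_sum]
    rw [sub_eq_neg_add, ← Finset.sum_neg_distrib]
    congr 1 <;> exact Finset.sum_congr rfl fun i _ => by ring
  obtain ⟨hiff, hval⟩ := aux_comp_mulVec N hdetN_ne g hg_cont.aestronglyMeasurable
  have hIntStep : Integrable fun w => g (N *ᵥ w) := by
    have : (fun w => g (N *ᵥ w)) =
        fun v => cexp (-1 * ∑ i, (v i : ℂ) ^ 2 + ∑ i, c i * v i) := funext pointwise
    rw [this]; exact heu_int
  have hInt : Integrable g := hiff.mp hIntStep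
  refine ⟨hInt, ?_⟩
  -- value computation
  have hstep : (∫ w, g (N *ᵥ w)) =
      (↑π / 1) ^ ((Fintype.card (Fin d) : ℂ) / 2) * cexp ((∑ i, c i ^ 2) / (4 * 1)) := by
    rw [show (fun w => g (N *ᵥ w)) =
        fun v => cexp (-1 * ∑ i, (v i : ℂ) ^ 2 + ∑ i, c i * v i) from funext pointwise]
    exact heu_val
  have habs : |N.det|⁻¹ = Real.sqrt S.det := by
    rw [hdetN, abs_inv, inv_inv, abs_of_pos hdetR_pos, hdetR]
  have hsq : (0:ℝ) < Real.sqrt S.det := Real.sqrt_pos.mpr hdetS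
  -- from hval : ∫ g∘N = |N.det|⁻¹ • ∫ g
  have hgval : (∫ v, g v) = (Real.sqrt S.det)⁻¹ •
      ((↑π / 1) ^ ((Fintype.card (Fin d) : ℂ) / 2) * cexp ((∑ i, c i ^ 2) / (4 * 1))) := by
    rw [← hstep, hval, habs, smul_smul]
    rw [inv_mul_cancel₀ (ne_of_gt hsq), one_smul]
  rw [hgval]
  have hsum : (∑ i, c i ^ 2) = -(r^2) * ((u ⬝ᵥ S⁻¹.mulVec u : ℝ) : ℂ) := by
    rw [hc_def]
    simp only
    rw [← key3]
    push_cast [dotProduct]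
    rw [Finset.mul_sum]
    refine Finset.sum_congr rfl fun i _ => ?_
    rw [mul_pow, mul_pow, Complex.I_sq]
    ring
  rw [hsum]
  have hcpow : ((↑π / 1 : ℂ)) ^ ((Fintype.card (Fin d) : ℂ) / 2) =
      ((π ^ (d / 2 : ℝ) : ℝ) : ℂ) := by
    rw [div_one, Complex.ofReal_cpow Real.pi_pos.le]
    push_cast
    norm_num
  rw [hcpow]
  rw [show (-(r^2) * ((u ⬝ᵥ S⁻¹.mulVec u : ℝ) : ℂ)) / (4 * 1) =
      ((-(r ^ 2 / 4 * (u ⬝ᵥ S⁻¹.mulVec u)) : ℝ) : ℂ) by push_cast; ring]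
  rw [← Complex.ofReal_exp]
  rw [Complex.real_smul]
  push_cast
  ring

lemma aux_nonneg {d n : ℕ} (f : (Fin d → ℝ) → Matrix (Fin d) (Fin d) ℝ)
    (hP : ∀ x, (f x).PosDef) (x : Fin n → (Fin d → ℝ)) (c : Fin n → ℝ) {a : ℝ}
    (ha : 0 ≤ a) :
    0 ≤ ∑ p, ∑ q, c p * c q *
      (Real.exp (-(a * ((x p - x q) ⬝ᵥ ((f (x p) + f (x q))⁻¹).mulVec (x p - x q)))) /
        Real.sqrt ((f (x p) + f (x q)).det)) := by
  classical
  have hSpd : ∀ p q, (f (x p) + f (x q)).PosDef := fun p q => (hP (x p)).add (hP (x q))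
  set r := 2 * Real.sqrt a with hr_def
  have hr : r ^ 2 / 4 = a := by
    rw [hr_def, mul_pow, Real.sq_sqrt ha]; ring
  set h : Fin n → (Fin d → ℝ) → ℂ := fun p w =>
    (c p : ℂ) * cexp (Complex.I * r * ((x p ⬝ᵥ w : ℝ) : ℂ) -
      ((w ⬝ᵥ (f (x p)).mulVec w : ℝ) : ℂ)) with hh_def
  have hprod : ∀ p q w, h p w * (starRingEnd ℂ) (h q w) =
      ((c p * c q : ℝ) : ℂ) * cexp (Complex.I * r * (((x p - x q) ⬝ᵥ w : ℝ) : ℂ) -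
        ((w ⬝ᵥ (f (x p) + f (x q)).mulVec w : ℝ) : ℂ)) := by
    intro p q w
    rw [hh_def]
    simp only [map_mul, ← Complex.exp_conj, map_sub, map_mul, Complex.conj_I,
      Complex.conj_ofReal]
    rw [mul_mul_mul_comm, ← Complex.exp_add]
    push_cast
    congr 1
    rw [sub_dotProduct, Matrix.add_mulVec, dotProduct_add]
    push_cast
    ring
  have hint : ∀ p q, Integrable fun w => h p w * (starRingEnd ℂ) (h q w) := by
    intro p q
    simp only [hprod]
    exact ((aux_gauss (hSpd p q) (x p - x q) r).1).const_mul _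
  have hval : ∀ p q, (∫ w, h p w * (starRingEnd ℂ) (h q w)) =
      ((c p * c q * (π ^ (d / 2 : ℝ) *
        Real.exp (-(a * ((x p - x q) ⬝ᵥ ((f (x p) + f (x q))⁻¹).mulVec (x p - x q)))) /
        Real.sqrt ((f (x p) + f (x q)).det)) : ℝ) : ℂ) := by
    intro p q
    simp only [hprod]
    rw [integral_const_mul, (aux_gauss (hSpd p q) (x p - x q) r).2, hr]
    push_cast
    ring
  have hsum : (∑ p, ∑ q, ∫ w, h p w * (starRingEnd ℂ) (h q w)) =
      (((∫ w, Complex.normSq (∑ p, h p w)) : ℝ) : ℂ) := by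
    have step1 : ∀ p, (∑ q, ∫ w, h p w * (starRingEnd ℂ) (h q w)) =
        ∫ w, ∑ q, h p w * (starRingEnd ℂ) (h q w) :=
      fun p => (integral_finset_sum _ fun q _ => hint p q).symm
    simp only [step1]
    rw [← integral_finset_sum _ fun p _ => integrable_finset_sum _ fun q _ => hint p q]
    have : ∀ w, (∑ p, ∑ q, h p w * (starRingEnd ℂ) (h q w)) =
        ((Complex.normSq (∑ p, h p w) : ℝ) : ℂ) := by
      intro w
      rw [← Complex.mul_conj (∑ p, h p w), map_sum, Finset.sum_mul_sum]
    simp only [this]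
    exact integral_ofReal
  have hJ : 0 ≤ ∫ w, Complex.normSq (∑ p, h p w) :=
    integral_nonneg fun w => Complex.normSq_nonneg _
  have hreal : (∑ p, ∑ q, c p * c q * (π ^ (d / 2 : ℝ) *
        Real.exp (-(a * ((x p - x q) ⬝ᵥ ((f (x p) + f (x q))⁻¹).mulVec (x p - x q)))) /
        Real.sqrt ((f (x p) + f (x q)).det))) =
      ∫ w, Complex.normSq (∑ p, h p w) := by
    have := hsum
    simp only [hval] at this
    exact_mod_cast this
  have hpi : (0:ℝ) < π ^ (d / 2 : ℝ) := Real.rpow_pos_of_pos Real.pi_pos _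
  have hfact : π ^ (d / 2 : ℝ) * (∑ p, ∑ q, c p * c q *
      (Real.exp (-(a * ((x p - x q) ⬝ᵥ ((f (x p) + f (x q))⁻¹).mulVec (x p - x q)))) /
        Real.sqrt ((f (x p) + f (x q)).det))) =
      ∫ w, Complex.normSq (∑ p, h p w) := by
    rw [← hreal, Finset.mul_sum]
    refine Finset.sum_congr rfl fun p _ => ?_
    rw [Finset.mul_sum]
    refine Finset.sum_congr rfl fun q _ => ?_
    ring
  nlinarith [hfact, hJ, hpi]

end SteinAux

/-- Stein's construction: if `f(x)` is symmetric and strictly positive definite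
for every `x`, then
`C(x,y) = φ(√((x−y)ᵀ (f(x)+f(y))⁻¹ (x−y))) / √det(f(x)+f(y))`
is a covariance function on `ℝ^d`, for any normal scale mixture `φ`. -/
theorem stein_class_posDef (d : ℕ) (hd : 0 < d)
    (φ : ℝ → ℝ) (hφ : IsNormalScaleMixture φ)
    (f : (Fin d → ℝ) → Matrix (Fin d) (Fin d) ℝ)
    (hsymm : ∀ x, (f x).IsSymm)
    (hf : ∀ (x : Fin d → ℝ) (v : Fin d → ℝ), v ≠ 0 → 0 < v ⬝ᵥ (f x).mulVec v) :
    IsRealPDKernel d (fun x y =>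
      φ (Real.sqrt ((x - y) ⬝ᵥ ((f x + f y)⁻¹).mulVec (x - y))) /
        Real.sqrt ((f x + f y).det)) := by
  classical
  have hPD : ∀ x, (f x).PosDef := by
    intro x
    refine Matrix.PosDef.of_dotProduct_mulVec_pos ?_ fun v hv => ?_
    · rw [Matrix.IsHermitian, Matrix.conjTranspose_eq_transpose_of_trivial]
      exact hsymm x
    · simpa using hf x v hv
  obtain ⟨F, hFfin, hF0, hFrep⟩ := hφ
  constructor
  · -- symmetry
    intro x y
    simp only
    have h1 : f y + f x = f x + f y := add_comm _ _
    have h2 : y - x = -(x - y) := (neg_sub x y).symm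
    have h3 : (y - x) ⬝ᵥ ((f x + f y)⁻¹).mulVec (y - x) =
        (x - y) ⬝ᵥ ((f x + f y)⁻¹).mulVec (x - y) := by
      rw [h2, neg_dotProduct, Matrix.mulVec_neg, dotProduct_neg, neg_neg]
    rw [h1, h3]
  · -- positivity
    intro n x c
    simp only
    set S : Fin n → Fin n → Matrix (Fin d) (Fin d) ℝ := fun p q => f (x p) + f (x q)
      with hS_def
    have hSpd : ∀ p q, (S p q).PosDef := fun p q => (hPD (x p)).add (hPD (x q))
    set Q : Fin n → Fin n → ℝ := fun p q =>
      (x p - x q) ⬝ᵥ ((S p q)⁻¹).mulVec (x p - x q) with hQ_def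
    have hQ : ∀ p q, 0 ≤ Q p q := by
      intro p q
      have h := ((hSpd p q).inv.posSemidef).dotProduct_mulVec_nonneg (x p - x q)
      simpa only [star_trivial, RCLike.re_to_real] using h
    have hdet : ∀ p q, 0 < Real.sqrt (S p q).det :=
      fun p q => Real.sqrt_pos.mpr (hSpd p q).det_pos
    have hae : ∀ᵐ a ∂F, 0 ≤ a := by
      rw [ae_iff]
      convert hF0 using 2
      ext a
      simp [not_le]
    set g : Fin n → Fin n → ℝ → ℝ := fun p q a =>
      Real.exp (-(a * Q p q)) / Real.sqrt (S p q).det with hg_def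
    have hg_int : ∀ p q, Integrable (g p q) F := by
      intro p q
      refine Integrable.mono' (integrable_const ((Real.sqrt (S p q).det)⁻¹))
        ?_ ?_
      · exact ((Real.continuous_exp.comp (by fun_prop)).div_const _).aestronglyMeasurable
      · filter_upwards [hae] with a ha
        rw [hg_def]
        simp only [Real.norm_eq_abs, abs_div, abs_of_pos (Real.exp_pos _),
          abs_of_pos (hdet p q)]
        rw [div_le_iff₀ (hdet p q), inv_mul_cancel₀ (ne_of_gt (hdet p q))]
        exact Real.exp_le_one_iff.mpr (by nlinarith [hQ p q])
    have hK : ∀ p q, φ (Real.sqrt (Q p q)) / Real.sqrt (S p q).det =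
        ∫ a, g p q a ∂F := by
      intro p q
      rw [hFrep _ (Real.sqrt_nonneg _), Real.sq_sqrt (hQ p q), hg_def]
      rw [integral_div]
    simp only [hQ_def, hS_def] at hK
    simp only [hK]
    have hswap : (∑ p, ∑ q, c p * c q * ∫ a, g p q a ∂F) =
        ∫ a, ∑ p, ∑ q, c p * c q * g p q a ∂F := by
      rw [integral_finset_sum _ fun p _ =>
        integrable_finset_sum _ fun q _ => ((hg_int p q).const_mul _)]
      refine Finset.sum_congr rfl fun p _ => ?_
      rw [integral_finset_sum _ fun q _ => ((hg_int p q).const_mul _)]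
      refine Finset.sum_congr rfl fun q _ => ?_
      rw [integral_const_mul]
    rw [hswap]
    refine integral_nonneg_of_ae ?_
    filter_upwards [hae] with a ha
    exact aux_nonneg f hPD x c ha
end

section
/- Let d be a positive integer and let B₁, B₂, M₁, M₂ ∈ Matrix (Fin d) (Fin d) ℝ be symmetric strictly positive definite matrices such that M₂ − M₁ and B₂⁻¹ − B₁⁻¹ are positive semidefinite. Then for b ∈ ℝ the inequality det(B₁)^{−1/2} · exp(−ωᵀ M₁ ω − ‖ω‖² · ξᵀ B₁⁻¹ ξ) + b · det(B₂)^{−1/2} · exp(−ωᵀ M₂ ω − ‖ω‖² · ξᵀ B₂⁻¹ ξ) ≥ 0 holds for all ω, ξ ∈ ℝ^d if and only if b ≥ −√( det(B₂) / det(B₁) ). -/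
open scoped Matrix BigOperators

/-- For symmetric strictly positive definite `B₁, B₂, M₁, M₂` with `M₂ − M₁` and
`B₂⁻¹ − B₁⁻¹` positive semidefinite, the inequality
`det(B₁)^{−1/2} exp(−ωᵀM₁ω − ‖ω‖² ξᵀB₁⁻¹ξ) + b det(B₂)^{−1/2} exp(−ωᵀM₂ω − ‖ω‖² ξᵀB₂⁻¹ξ) ≥ 0`
holds for all `ω, ξ ∈ ℝ^d` iff `b ≥ −√(det B₂ / det B₁)`. -/
theorem mixture_nonneg_iff (d : ℕ) (hd : 0 < d)
    (B₁ B₂ M₁ M₂ : Matrix (Fin d) (Fin d) ℝ)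
    (hB₁ : B₁.PosDef) (hB₂ : B₂.PosDef) (hM₁ : M₁.PosDef) (hM₂ : M₂.PosDef)
    (hM : (M₂ - M₁).PosSemidef) (hB : (B₂⁻¹ - B₁⁻¹).PosSemidef) (b : ℝ) :
    (∀ ω ξ : Fin d → ℝ,
      0 ≤ Real.exp (-(ω ⬝ᵥ M₁.mulVec ω) - (∑ i, ω i ^ 2) * (ξ ⬝ᵥ (B₁⁻¹).mulVec ξ)) /
            Real.sqrt B₁.det +
          b * Real.exp (-(ω ⬝ᵥ M₂.mulVec ω) - (∑ i, ω i ^ 2) * (ξ ⬝ᵥ (B₂⁻¹).mulVec ξ)) /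
            Real.sqrt B₂.det) ↔
      b ≥ -Real.sqrt (B₂.det / B₁.det) := by
  have hd₁ : (0:ℝ) < B₁.det := hB₁.det_pos
  have hd₂ : (0:ℝ) < B₂.det := hB₂.det_pos
  set s₁ := Real.sqrt B₁.det with hs₁def
  set s₂ := Real.sqrt B₂.det with hs₂def
  have hs₁ : 0 < s₁ := Real.sqrt_pos.mpr hd₁
  have hs₂ : 0 < s₂ := Real.sqrt_pos.mpr hd₂
  have hq : Real.sqrt (B₂.det / B₁.det) = s₂ / s₁ := Real.sqrt_div hd₂.le _
  constructor
  · intro h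
    have h0 := h 0 0
    simp only [Matrix.mulVec_zero, dotProduct_zero, neg_zero, mul_zero, sub_zero,
      Real.exp_zero, mul_one] at h0
    have h1 : 0 ≤ s₂ + b * s₁ := by
      have h2 := mul_nonneg (mul_nonneg hs₁.le hs₂.le) h0
      have h3 : (s₁ * s₂) * (1 / s₁ + b / s₂) = s₂ + b * s₁ := by
        field_simp
      linarith [h3 ▸ h2]
    rw [ge_iff_le, hq, ← neg_div, div_le_iff₀ hs₁]
    linarith
  · intro hb ω ξ
    rw [ge_iff_le, hq] at hb
    have h1 : -s₂ ≤ b * s₁ := by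
      have := mul_le_mul_of_nonneg_right hb hs₁.le
      have h3 : -(s₂ / s₁) * s₁ = -s₂ := by field_simp
      linarith [h3 ▸ this]
    have hcoef : 0 ≤ 1 / s₁ + b / s₂ := by
      have h4 : 1 / s₁ + b / s₂ = (s₂ + b * s₁) / (s₁ * s₂) := by
        field_simp
      rw [h4]
      exact div_nonneg (by linarith) (mul_nonneg hs₁.le hs₂.le)
    set E₁ := -(ω ⬝ᵥ M₁.mulVec ω) - (∑ i, ω i ^ 2) * (ξ ⬝ᵥ (B₁⁻¹).mulVec ξ) with hE₁
    set E₂ := -(ω ⬝ᵥ M₂.mulVec ω) - (∑ i, ω i ^ 2) * (ξ ⬝ᵥ (B₂⁻¹).mulVec ξ) with hE₂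
    have hE : E₂ ≤ E₁ := by
      have hm := hM.dotProduct_mulVec_nonneg ω
      have hbv := hB.dotProduct_mulVec_nonneg ξ
      simp only [star_trivial, Matrix.sub_mulVec, dotProduct_sub] at hm hbv
      have hsum : (0:ℝ) ≤ ∑ i, ω i ^ 2 := Finset.sum_nonneg fun i _ => sq_nonneg _
      have := mul_nonneg hsum hbv
      rw [hE₁, hE₂]
      nlinarith
    have hexp : Real.exp E₂ ≤ Real.exp E₁ := Real.exp_le_exp.mpr hE
    have hpos : 0 < Real.exp E₂ := Real.exp_pos _
    have key : 0 ≤ Real.exp E₂ * (1 / s₁ + b / s₂) := mul_nonneg hpos.le hcoef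
    have heq : Real.exp E₂ * (1 / s₁ + b / s₂) =
        Real.exp E₂ / s₁ + b * Real.exp E₂ / s₂ := by ring
    have hmono : Real.exp E₂ / s₁ ≤ Real.exp E₁ / s₁ := by gcongr
    linarith [heq ▸ key]
end

section
/- Let d be a positive integer, h, μ ∈ ℝ^d, u ∈ ℝ, and D ∈ Matrix (Fin d) (Fin d) ℝ symmetric and strictly positive definite. Then ∫_{ℝ^d} exp(−‖h − u·v‖²) · (π^d · det D)^{−1/2} · exp(−(v − μ)ᵀ D⁻¹ (v − μ)) dv = det(I + u² D)^{−1/2} · exp( −(h − u·μ)ᵀ (I + u² D)⁻¹ (h − u·μ) ), where I is the d×d identity matrix and the integral is with respect to Lebesgue measure on ℝ^d. -/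
open scoped Matrix BigOperators
open MeasureTheory

section Aux

open Matrix Real

variable {n : Type*} [Fintype n] [DecidableEq n]

private lemma my_star_eq (U : Matrix n n ℝ) : star U = Uᵀ := by
  rw [Matrix.star_eq_conjTranspose, Matrix.conjTranspose_eq_transpose_of_trivial]

private lemma my_diag_conj_inv (U : Matrix n n ℝ) (h1 : U * star U = 1) (h2 : star U * U = 1)
    (a : n → ℝ) (ha : ∀ i, a i ≠ 0) :
    (U * diagonal a * star U)⁻¹ = U * diagonal (fun i => (a i)⁻¹) * star U := by
  apply inv_eq_left_inv
  have e : (U * diagonal (fun i => (a i)⁻¹) * star U) * (U * diagonal a * star U)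
      = U * ((diagonal (fun i => (a i)⁻¹)) * (star U * U) * diagonal a) * star U := by
    simp only [Matrix.mul_assoc]
  rw [e, h2, Matrix.mul_one, diagonal_mul_diagonal,
    show (fun i => (a i)⁻¹ * a i) = fun _ => (1:ℝ) from funext fun i => inv_mul_cancel₀ (ha i),
    diagonal_one, Matrix.mul_one, h1]

private lemma my_quad_conj (U : Matrix n n ℝ) (h2 : star U * U = 1)
    (a : n → ℝ) (x : n → ℝ) :
    (U *ᵥ x) ⬝ᵥ ((U * diagonal a * star U) *ᵥ (U *ᵥ x)) = ∑ i, a i * x i ^ 2 := by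
  rw [mulVec_mulVec, Matrix.mul_assoc (U * diagonal a), h2, Matrix.mul_one,
    dotProduct_mulVec, ← Matrix.vecMul_vecMul]
  have e1 : (U *ᵥ x) ᵥ* U = x := by
    rw [show (U *ᵥ x) ᵥ* U = Uᵀ *ᵥ (U *ᵥ x) from (Matrix.mulVec_transpose U _).symm,
      mulVec_mulVec, ← my_star_eq, h2, one_mulVec]
  rw [e1]
  simp [vecMul_diagonal, dotProduct]
  exact Finset.sum_congr rfl fun i _ => by ring

private lemma my_norm_conj (U : Matrix n n ℝ) (h2 : star U * U = 1) (x : n → ℝ) :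
    ∑ i, (U *ᵥ x) i ^ 2 = ∑ i, x i ^ 2 := by
  have e : (U *ᵥ x) ⬝ᵥ (U *ᵥ x) = x ⬝ᵥ x := by
    rw [dotProduct_mulVec,
      show (U *ᵥ x) ᵥ* U = Uᵀ *ᵥ (U *ᵥ x) from (Matrix.mulVec_transpose U _).symm,
      mulVec_mulVec, ← my_star_eq, h2, one_mulVec]
  simpa [dotProduct, pow_two] using e

private lemma my_det_conj (U : Matrix n n ℝ) (h1 : U * star U = 1) (a : n → ℝ) :
    (U * diagonal a * star U).det = ∏ i, a i := by
  rw [Matrix.det_mul_right_comm, h1, Matrix.one_mul, det_diagonal]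

private lemma my_sqrt_prod {ι : Type*} [Fintype ι] (f : ι → ℝ) (hf : ∀ i, 0 ≤ f i) :
    Real.sqrt (∏ i, f i) = ∏ i, Real.sqrt (f i) := by
  classical
  induction (Finset.univ : Finset ι) using Finset.cons_induction with
  | empty => simp
  | cons i s hi ih =>
      rw [Finset.prod_cons, Finset.prod_cons, Real.sqrt_mul (hf i), ih]

private lemma my_gauss1d (g u lam : ℝ) (hlam : 0 < lam) :
    ∫ t : ℝ, Real.exp (-((g - u * t) ^ 2 + lam⁻¹ * t ^ 2)) * (Real.sqrt (Real.pi * lam))⁻¹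
      = (Real.sqrt (1 + u ^ 2 * lam))⁻¹ * Real.exp (-((1 + u ^ 2 * lam)⁻¹ * g ^ 2)) := by
  set a : ℝ := u ^ 2 + lam⁻¹ with ha_def
  have ha : 0 < a := by positivity
  have hb : (0:ℝ) < 1 + u ^ 2 * lam := by nlinarith [sq_nonneg u]
  have key : ∀ t : ℝ, (g - u * t) ^ 2 + lam⁻¹ * t ^ 2
      = a * (t - g * u / a) ^ 2 + (1 + u ^ 2 * lam)⁻¹ * g ^ 2 := by
    intro t
    rw [ha_def]
    field_simp
    ring_nf
  simp_rw [key, neg_add, Real.exp_add, mul_assoc]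
  rw [integral_mul_const]
  have sub : ∫ t : ℝ, Real.exp (-(a * (t - g * u / a) ^ 2)) = ∫ t : ℝ, Real.exp (-(a * t ^ 2)) :=
    integral_sub_right_eq_self (fun t => Real.exp (-(a * t ^ 2))) (g * u / a)
  have gint : ∫ t : ℝ, Real.exp (-(a * t ^ 2)) = Real.sqrt (π / a) := by
    simpa [neg_mul] using integral_gaussian a
  rw [sub, gint]
  have h1 : Real.sqrt (π / a) * (Real.sqrt (π * lam))⁻¹ = (Real.sqrt (1 + u ^ 2 * lam))⁻¹ := by
    rw [← Real.sqrt_inv, ← Real.sqrt_mul (by positivity)]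
    rw [ha_def]
    congr 1
    field_simp
    rw [one_div, Real.sqrt_inv, add_comm (u ^ 2 * lam) 1, inv_mul_cancel₀ (Real.sqrt_pos.mpr hb).ne']
  rw [mul_comm (Real.exp _), ← mul_assoc, h1]

end Aux

/-- Explicit Cox–Isham covariance (Gaussian case):
`∫ exp(−‖h − u v‖²) (π^d det D)^{−1/2} exp(−(v−μ)ᵀ D⁻¹ (v−μ)) dv
  = det(I + u² D)^{−1/2} exp(−(h − uμ)ᵀ (I + u² D)⁻¹ (h − uμ))`. -/
theorem cox_isham_gaussian_integral (d : ℕ) (hd : 0 < d)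
    (h μ : Fin d → ℝ) (u : ℝ) (D : Matrix (Fin d) (Fin d) ℝ) (hD : D.PosDef) :
    ∫ v : Fin d → ℝ,
        Real.exp (-(∑ i, (h i - u * v i) ^ 2)) *
          ((Real.sqrt (Real.pi ^ d * D.det))⁻¹ *
            Real.exp (-((v - μ) ⬝ᵥ (D⁻¹).mulVec (v - μ)))) =
      (Real.sqrt ((1 + u ^ 2 • D).det))⁻¹ *
        Real.exp (-((h - u • μ) ⬝ᵥ ((1 + u ^ 2 • D)⁻¹).mulVec (h - u • μ))) := by
  classical
  open Matrix Real in
  set U : Matrix (Fin d) (Fin d) ℝ := (hD.1.eigenvectorUnitary : Matrix (Fin d) (Fin d) ℝ)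
    with hUdef
  set lam : Fin d → ℝ := hD.1.eigenvalues with hlamdef
  have hU1 : U * star U = 1 := Matrix.mem_unitaryGroup_iff.mp (hD.1.eigenvectorUnitary).2
  have hU2 : star U * U = 1 := Matrix.mem_unitaryGroup_iff'.mp (hD.1.eigenvectorUnitary).2
  have spec : D = U * Matrix.diagonal lam * star U := by
    simpa using hD.1.spectral_theorem
  have hlam : ∀ i, 0 < lam i := fun i => hD.eigenvalues_pos i
  have hlamne : ∀ i, lam i ≠ 0 := fun i => (hlam i).ne'
  have hb : ∀ i, (0:ℝ) < 1 + u ^ 2 * lam i := fun i => by nlinarith [sq_nonneg u, hlam i]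
  set g : Fin d → ℝ := star U *ᵥ (h - u • μ) with hgdef
  have hg : U *ᵥ g = h - u • μ := by
    rw [hgdef, Matrix.mulVec_mulVec, hU1, Matrix.one_mulVec]
  -- spectral form of 1 + u^2 • D
  have spec2 : (1 : Matrix (Fin d) (Fin d) ℝ) + u ^ 2 • D
      = U * Matrix.diagonal (fun i => 1 + u ^ 2 * lam i) * star U := by
    have e1 : Matrix.diagonal (fun i : Fin d => 1 + u ^ 2 * lam i)
        = 1 + u ^ 2 • Matrix.diagonal lam := by
      ext i j
      rcases eq_or_ne i j with rfl | hij
      · simp [Matrix.diagonal_apply_eq, Matrix.one_apply]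
      · simp [Matrix.diagonal_apply_ne _ hij, Matrix.one_apply, hij]
    rw [e1, Matrix.mul_add, Matrix.add_mul, Matrix.mul_one, hU1, mul_smul_comm,
      smul_mul_assoc, ← spec]
  have det2 : (1 + u ^ 2 • D).det = ∏ i, (1 + u ^ 2 * lam i) := by
    rw [spec2, my_det_conj U hU1]
  have detD : D.det = ∏ i, lam i := by
    conv_lhs => rw [spec]
    exact my_det_conj U hU1 lam
  have rhsquad : (h - u • μ) ⬝ᵥ ((1 + u ^ 2 • D)⁻¹ *ᵥ (h - u • μ))
      = ∑ i, (1 + u ^ 2 * lam i)⁻¹ * g i ^ 2 := by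
    conv_lhs => rw [← hg]
    rw [spec2, my_diag_conj_inv U hU1 hU2 _ (fun i => (hb i).ne'), my_quad_conj U hU2]
  set F : (Fin d → ℝ) → ℝ := fun v =>
    Real.exp (-(∑ i, (h i - u * v i) ^ 2)) *
      ((Real.sqrt (Real.pi ^ d * D.det))⁻¹ *
        Real.exp (-((v - μ) ⬝ᵥ (D⁻¹).mulVec (v - μ)))) with hFdef
  have hFc : Continuous F := by
    rw [hFdef]
    simp only [dotProduct, Matrix.mulVec, Pi.sub_apply]
    fun_prop
  have hmap : Measure.map (Matrix.toLin' U) (volume : Measure (Fin d → ℝ)) = volume := by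
    have hdet : |U.det| = 1 := by
      have h2 : U.det * U.det = 1 := by
        have := congrArg Matrix.det hU1
        rwa [Matrix.det_mul, Matrix.star_eq_conjTranspose,
          Matrix.conjTranspose_eq_transpose_of_trivial, Matrix.det_transpose,
          Matrix.det_one] at this
      nlinarith [abs_nonneg U.det, abs_mul_abs_self U.det]
    have hne : U.det ≠ 0 := by
      intro h0; rw [h0] at hdet; simp at hdet
    rw [Real.map_matrix_volume_pi_eq_smul_volume_pi hne, abs_inv, hdet]
    simp
  have step1 : (∫ v, F v) = ∫ w, F (μ + U *ᵥ w) := by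
    have hGc : Continuous fun v => F (μ + v) := hFc.comp (continuous_const.add continuous_id)
    have hm : AEMeasurable (Matrix.toLin' U) (volume : Measure (Fin d → ℝ)) :=
      ((Matrix.toLin' U).continuous_of_finiteDimensional).measurable.aemeasurable
    calc ∫ v, F v = ∫ v, F (μ + v) := (integral_add_left_eq_self F μ).symm
      _ = ∫ v, F (μ + v) ∂(Measure.map (Matrix.toLin' U) volume) := by rw [hmap]
      _ = ∫ w, F (μ + Matrix.toLin' U w) := integral_map hm (hmap ▸ hGc.aestronglyMeasurable)
      _ = ∫ w, F (μ + U *ᵥ w) := by simp [Matrix.toLin'_apply]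
  have point : ∀ w : Fin d → ℝ, F (μ + U *ᵥ w)
      = ∏ i, (Real.exp (-((g i - u * w i) ^ 2 + (lam i)⁻¹ * (w i) ^ 2)) *
          (Real.sqrt (Real.pi * lam i))⁻¹) := by
    intro w
    have hsub : μ + U *ᵥ w - μ = U *ᵥ w := add_sub_cancel_left μ (U *ᵥ w)
    have hquad : (U *ᵥ w) ⬝ᵥ (D⁻¹ *ᵥ (U *ᵥ w)) = ∑ i, (lam i)⁻¹ * w i ^ 2 := by
      rw [spec, my_diag_conj_inv U hU1 hU2 _ hlamne, my_quad_conj U hU2]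
    have hnorm : ∑ i, (h i - u * (μ + U *ᵥ w) i) ^ 2 = ∑ i, (g i - u * w i) ^ 2 := by
      have e : ∀ i, h i - u * (μ + U *ᵥ w) i = (U *ᵥ (g - u • w)) i := by
        intro i
        have h1 : (U *ᵥ (g - u • w)) i = (U *ᵥ g) i - u * (U *ᵥ w) i := by
          rw [Matrix.mulVec_sub, Matrix.mulVec_smul]
          simp [smul_eq_mul]
        rw [h1, hg]
        simp only [Pi.sub_apply, Pi.add_apply, Pi.smul_apply, smul_eq_mul]
        ring
      simp_rw [e]
      rw [my_norm_conj U hU2]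
      refine Finset.sum_congr rfl fun i _ => ?_
      simp [smul_eq_mul]
    have hconst : (Real.sqrt (Real.pi ^ d * D.det))⁻¹
        = ∏ i, (Real.sqrt (Real.pi * lam i))⁻¹ := by
      rw [detD, show Real.pi ^ d * ∏ i, lam i = ∏ i : Fin d, (Real.pi * lam i) from by
          rw [Finset.prod_mul_distrib, Finset.prod_const, Finset.card_univ, Fintype.card_fin],
        my_sqrt_prod _ (fun i => mul_nonneg Real.pi_pos.le (hlam i).le)]
      rw [← Finset.prod_inv_distrib]
    rw [hFdef]
    simp only []
    rw [hsub, hquad, hnorm, hconst]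
    rw [Finset.prod_mul_distrib, ← Real.exp_sum]
    have e2 : ∑ i : Fin d, -((g i - u * w i) ^ 2 + (lam i)⁻¹ * (w i) ^ 2)
        = -(∑ i, (g i - u * w i) ^ 2) + -(∑ i, (lam i)⁻¹ * (w i) ^ 2) := by
      simp only [neg_add, Finset.sum_add_distrib, Finset.sum_neg_distrib]
    rw [e2, Real.exp_add]
    ring
  rw [step1]
  simp_rw [point]
  rw [MeasureTheory.volume_pi]
  rw [MeasureTheory.integral_fintype_prod_eq_prod (ι := Fin d)
    (fun i t => Real.exp (-((g i - u * t) ^ 2 + (lam i)⁻¹ * t ^ 2)) *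
      (Real.sqrt (Real.pi * lam i))⁻¹)]
  rw [Finset.prod_congr rfl fun i _ => my_gauss1d (g i) u (lam i) (hlam i)]
  rw [Finset.prod_mul_distrib, Finset.prod_inv_distrib,
    ← my_sqrt_prod _ (fun i => (hb i).le), ← det2, ← Real.exp_sum]
  congr 1
  rw [rhsquad, ← Finset.sum_neg_distrib]
end

section
/- Let d be a positive integer, μ ∈ ℝ^d, D ∈ Matrix (Fin d) (Fin d) ℝ symmetric strictly positive definite, and φ a normal scale mixture. Define C : ℝ^d × ℝ → ℝ by C(h,u) = det(I + u² D)^{−1/2} · φ( √( (h − u·μ)ᵀ (I + u² D)⁻¹ (h − u·μ) ) ), where I is the d×d identity matrix. Then the kernel K((x,s),(y,t)) = C(x − y, s − t) is a real positive definite kernel on ℝ^d × ℝ, i.e., C is a translation invariant covariance function on ℝ^{d+1}. -/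
open scoped Matrix BigOperators
open MeasureTheory

/-- A real positive definite kernel on a space `E`. -/
def IsRealPDKernelOn {E : Type*} (K : E → E → ℝ) : Prop :=
  (∀ x y, K x y = K y x) ∧
  ∀ (n : ℕ) (x : Fin n → E) (a : Fin n → ℝ),
    0 ≤ ∑ p, ∑ q, a p * a q * K (x p) (x q)

section CoxIshamAux

open Real Nat

private lemma gram_pow_nonneg {n d : ℕ} (y : Fin n → Fin d → ℝ) (b : Fin n → ℝ) (m : ℕ) :
    0 ≤ ∑ p, ∑ q, b p * b q * (∑ i, y p i * y q i) ^ m := by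
  classical
  set T := Fintype.piFinset (fun _ : Fin m => (Finset.univ : Finset (Fin d))) with hT
  have expand : ∀ p q : Fin n, b p * b q * (∑ i, y p i * y q i) ^ m =
      ∑ f ∈ T, (b p * ∏ k, y p (f k)) * (b q * ∏ k, y q (f k)) := by
    intro p q
    have h1 : (∑ i, y p i * y q i) ^ m = ∏ _k : Fin m, ∑ i, y p i * y q i := by
      rw [Finset.prod_const, Finset.card_univ, Fintype.card_fin]
    rw [h1, Finset.prod_univ_sum, Finset.mul_sum]
    refine Finset.sum_congr rfl fun f _ => ?_
    rw [Finset.prod_mul_distrib]; ring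
  simp_rw [expand]
  have swap : (∑ p, ∑ q, ∑ f ∈ T, (b p * ∏ k, y p (f k)) * (b q * ∏ k, y q (f k)))
      = ∑ f ∈ T, ∑ p, ∑ q, (b p * ∏ k, y p (f k)) * (b q * ∏ k, y q (f k)) :=
    calc (∑ p, ∑ q, ∑ f ∈ T, (b p * ∏ k, y p (f k)) * (b q * ∏ k, y q (f k)))
        = ∑ p, ∑ f ∈ T, ∑ q, (b p * ∏ k, y p (f k)) * (b q * ∏ k, y q (f k)) :=
          Finset.sum_congr rfl (fun p _ => Finset.sum_comm)
      _ = ∑ f ∈ T, ∑ p, ∑ q, (b p * ∏ k, y p (f k)) * (b q * ∏ k, y q (f k)) :=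
          Finset.sum_comm
  rw [swap]
  refine Finset.sum_nonneg fun f _ => ?_
  rw [← Finset.sum_mul_sum]
  exact mul_self_nonneg _

private lemma gaussian_kernel_pd {n d : ℕ} {a : ℝ} (ha : 0 ≤ a) (y : Fin n → Fin d → ℝ)
    (c : Fin n → ℝ) :
    0 ≤ ∑ p, ∑ q, c p * c q * Real.exp (-(a * ∑ i, (y p i - y q i) ^ 2)) := by
  have hexp : ∀ t : ℝ, Real.exp t = ∑' m : ℕ, t ^ m / (m ! : ℝ) := by
    intro t
    rw [Real.exp_eq_exp_ℝ, NormedSpace.exp_eq_tsum_div]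
  have key : ∀ p q : Fin n, c p * c q * Real.exp (-(a * ∑ i, (y p i - y q i) ^ 2)) =
      ∑' m : ℕ, ((2 * a) ^ m / (m ! : ℝ) *
        ((c p * Real.exp (-(a * ∑ i, y p i ^ 2))) *
         (c q * Real.exp (-(a * ∑ i, y q i ^ 2))) * (∑ i, y p i * y q i) ^ m)) := by
    intro p q
    have hsplit : (-(a * ∑ i, (y p i - y q i) ^ 2)) =
        (-(a * ∑ i, y p i ^ 2)) + (-(a * ∑ i, y q i ^ 2)) + (2 * a * ∑ i, y p i * y q i) := by
      have h0 : (∑ i, (y p i - y q i) ^ 2) =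
          ∑ i, (y p i ^ 2 + y q i ^ 2 - 2 * (y p i * y q i)) :=
        Finset.sum_congr rfl fun i _ => by ring
      rw [h0, Finset.sum_sub_distrib, Finset.sum_add_distrib, ← Finset.mul_sum]
      ring
    rw [hsplit, Real.exp_add, Real.exp_add, hexp (2 * a * ∑ i, y p i * y q i),
      ← tsum_mul_left, ← tsum_mul_left]
    exact tsum_congr fun m => by rw [mul_pow]; ring
  simp_rw [key]
  have hsummable : ∀ p q : Fin n, Summable (fun m : ℕ =>
      ((2 * a) ^ m / (m ! : ℝ) *
        ((c p * Real.exp (-(a * ∑ i, y p i ^ 2))) *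
         (c q * Real.exp (-(a * ∑ i, y q i ^ 2))) * (∑ i, y p i * y q i) ^ m))) := by
    intro p q
    have h1 : Summable (fun m : ℕ => (2 * a * (∑ i, y p i * y q i)) ^ m / (m ! : ℝ)) :=
      Real.summable_pow_div_factorial _
    refine (h1.mul_left ((c p * Real.exp (-(a * ∑ i, y p i ^ 2))) *
        (c q * Real.exp (-(a * ∑ i, y q i ^ 2))))).congr fun m => ?_
    rw [mul_pow]; ring
  have hflip : (∑ p, ∑ q, ∑' m : ℕ, ((2 * a) ^ m / (m ! : ℝ) *
        ((c p * Real.exp (-(a * ∑ i, y p i ^ 2))) *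
         (c q * Real.exp (-(a * ∑ i, y q i ^ 2))) * (∑ i, y p i * y q i) ^ m)))
      = ∑' m : ℕ, ∑ p, ∑ q, ((2 * a) ^ m / (m ! : ℝ) *
        ((c p * Real.exp (-(a * ∑ i, y p i ^ 2))) *
         (c q * Real.exp (-(a * ∑ i, y q i ^ 2))) * (∑ i, y p i * y q i) ^ m)) :=
    calc (∑ p, ∑ q, ∑' m : ℕ, ((2 * a) ^ m / (m ! : ℝ) *
        ((c p * Real.exp (-(a * ∑ i, y p i ^ 2))) *
         (c q * Real.exp (-(a * ∑ i, y q i ^ 2))) * (∑ i, y p i * y q i) ^ m)))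
        = ∑ p, ∑' m : ℕ, ∑ q, ((2 * a) ^ m / (m ! : ℝ) *
        ((c p * Real.exp (-(a * ∑ i, y p i ^ 2))) *
         (c q * Real.exp (-(a * ∑ i, y q i ^ 2))) * (∑ i, y p i * y q i) ^ m)) :=
          Finset.sum_congr rfl fun p _ => (Summable.tsum_finsetSum fun q _ => hsummable p q).symm
      _ = _ := (Summable.tsum_finsetSum fun p _ => summable_sum fun q _ => hsummable p q).symm
  rw [hflip]
  refine tsum_nonneg fun m => ?_
  simp only [← Finset.mul_sum]
  refine mul_nonneg (by positivity) ?_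
  exact gram_pow_nonneg y (fun p => c p * Real.exp (-(a * ∑ i, y p i ^ 2))) m

private lemma sqrt_prod' {d : ℕ} (f : Fin d → ℝ) (hf : ∀ i, 0 ≤ f i) :
    Real.sqrt (∏ i, f i) = ∏ i, Real.sqrt (f i) := by
  simp_rw [Real.sqrt_eq_rpow]
  exact (Real.finset_prod_rpow Finset.univ f (fun i _ => hf i) _).symm

private lemma mixture_integral {a lam w u : ℝ} (ha : 0 < a) (hl : 0 < lam) :
    (∫ z : ℝ, Real.exp (-(a * (w - u * z) ^ 2)) *
      (Real.sqrt (a / (π * lam)) * Real.exp (-(a * z ^ 2 / lam))))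
      = (Real.sqrt (1 + u ^ 2 * lam))⁻¹ *
          Real.exp (-(a * ((1 + u ^ 2 * lam)⁻¹ * w ^ 2))) := by
  have hE : (0:ℝ) < 1 + u ^ 2 * lam := by positivity
  set b : ℝ := a * (u ^ 2 + 1 / lam) with hb_def
  have hb : 0 < b := by positivity
  set m : ℝ := u * w / (u ^ 2 + 1 / lam) with hm_def
  have hpoint : ∀ z : ℝ, Real.exp (-(a * (w - u * z) ^ 2)) *
      (Real.sqrt (a / (π * lam)) * Real.exp (-(a * z ^ 2 / lam)))
      = Real.sqrt (a / (π * lam)) * Real.exp (-(a * ((1 + u ^ 2 * lam)⁻¹ * w ^ 2))) *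
        Real.exp (-(b * (z - m) ^ 2)) := by
    intro z
    rw [mul_comm (Real.exp _), mul_assoc, ← Real.exp_add, mul_assoc, ← Real.exp_add]
    congr 2
    rw [hb_def, hm_def]
    have h1 : u ^ 2 + 1 / lam ≠ 0 := by positivity
    have h2 : (1:ℝ) + u ^ 2 * lam ≠ 0 := ne_of_gt hE
    field_simp
    ring
  rw [integral_congr_ae (Filter.Eventually.of_forall hpoint)]
  rw [MeasureTheory.integral_const_mul]
  have htrans : (∫ z : ℝ, Real.exp (-(b * (z - m) ^ 2))) = ∫ z : ℝ, Real.exp (-(b * z ^ 2)) :=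
    integral_sub_right_eq_self (fun z => Real.exp (-(b * z ^ 2))) m
  have hg := integral_gaussian b
  simp_rw [neg_mul] at hg
  rw [htrans, hg]
  have hcoef : Real.sqrt (a / (π * lam)) * Real.sqrt (π / b) = (Real.sqrt (1 + u ^ 2 * lam))⁻¹ := by
    rw [← Real.sqrt_mul (by positivity)]
    rw [show a / (π * lam) * (π / b) = (1 + u ^ 2 * lam)⁻¹ by
      rw [hb_def]
      have h1 : u ^ 2 + 1 / lam ≠ 0 := by positivity
      have h2 : (1:ℝ) + u ^ 2 * lam ≠ 0 := ne_of_gt hE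
      have h3 : (π:ℝ) ≠ 0 := Real.pi_ne_zero
      field_simp
      ring_nf]
    exact Real.sqrt_inv _
  rw [mul_right_comm, hcoef]

end CoxIshamAux

/-- The Cox–Isham model
`C(h,u) = det(I + u² D)^{−1/2} φ(√((h − uμ)ᵀ (I + u² D)⁻¹ (h − uμ)))`
is a translation invariant covariance function on `ℝ^{d+1}` for any normal scale
mixture `φ`. -/
theorem cox_isham_posDef (d : ℕ) (hd : 0 < d) (μ : Fin d → ℝ)
    (D : Matrix (Fin d) (Fin d) ℝ) (hD : D.PosDef)
    (φ : ℝ → ℝ) (hφ : IsNormalScaleMixture φ)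
    (C : (Fin d → ℝ) → ℝ → ℝ)
    (hC : ∀ (h : Fin d → ℝ) (u : ℝ), C h u =
      (Real.sqrt ((1 + u ^ 2 • D).det))⁻¹ *
        φ (Real.sqrt ((h - u • μ) ⬝ᵥ ((1 + u ^ 2 • D)⁻¹).mulVec (h - u • μ)))) :
    IsRealPDKernelOn (fun p₁ p₂ : (Fin d → ℝ) × ℝ => C (p₁.1 - p₂.1) (p₁.2 - p₂.2)) := by
  classical
  open Real Nat in
  -- spectral data
  have hH : D.IsHermitian := hD.1
  set U : Matrix (Fin d) (Fin d) ℝ := (hH.eigenvectorUnitary : Matrix (Fin d) (Fin d) ℝ)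
    with hU_def
  set lam : Fin d → ℝ := hH.eigenvalues with hlam_def
  have hlam : ∀ i, 0 < lam i := fun i => hD.eigenvalues_pos i
  have hUU : U * star U = 1 := Matrix.mem_unitaryGroup_iff.mp hH.eigenvectorUnitary.2
  have hUU' : star U * U = 1 := Matrix.mem_unitaryGroup_iff'.mp hH.eigenvectorUnitary.2
  have hspec : D = U * Matrix.diagonal lam * star U := by
    simpa [Function.comp] using hH.spectral_theorem
  have hE : ∀ (u : ℝ) (i : Fin d), (0:ℝ) < 1 + u ^ 2 * lam i := fun u i => by
    have := hlam i; positivity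
  have hAeq : ∀ u : ℝ, (1 : Matrix (Fin d) (Fin d) ℝ) + u ^ 2 • D
      = U * Matrix.diagonal (fun i => 1 + u ^ 2 * lam i) * star U := by
    intro u
    have hdiag : Matrix.diagonal (fun i => 1 + u ^ 2 * lam i)
        = 1 + u ^ 2 • Matrix.diagonal lam := by
      rw [← Matrix.diagonal_one, ← Matrix.diagonal_smul, ← Matrix.diagonal_add]
      congr 1
    rw [hdiag, mul_add, add_mul, mul_one, hUU, Matrix.mul_smul, Matrix.smul_mul, ← hspec]
  have hdet : ∀ u : ℝ, ((1 : Matrix (Fin d) (Fin d) ℝ) + u ^ 2 • D).det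
      = ∏ i, (1 + u ^ 2 * lam i) := by
    intro u
    rw [hAeq u, Matrix.det_mul, Matrix.det_mul]
    rw [show Matrix.det U * (Matrix.diagonal fun i => 1 + u ^ 2 * lam i).det * (star U).det
        = (Matrix.diagonal fun i => 1 + u ^ 2 * lam i).det * ((star U).det * U.det) by ring]
    rw [← Matrix.det_mul, hUU', Matrix.det_one, mul_one, Matrix.det_diagonal]
  have hAinv : ∀ u : ℝ, ((1 : Matrix (Fin d) (Fin d) ℝ) + u ^ 2 • D)⁻¹
      = U * Matrix.diagonal (fun i => (1 + u ^ 2 * lam i)⁻¹) * star U := by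
    intro u
    apply Matrix.inv_eq_right_inv
    rw [hAeq u]
    have h1 : (U * Matrix.diagonal (fun i => 1 + u ^ 2 * lam i) * star U) *
        (U * Matrix.diagonal (fun i => (1 + u ^ 2 * lam i)⁻¹) * star U)
        = U * ((Matrix.diagonal (fun i => 1 + u ^ 2 * lam i) * (star U * U)) *
            Matrix.diagonal (fun i => (1 + u ^ 2 * lam i)⁻¹)) * star U := by
      simp only [Matrix.mul_assoc]
    rw [h1, hUU', Matrix.mul_one, Matrix.diagonal_mul_diagonal]
    have h2 : (fun i => (1 + u ^ 2 * lam i) * (1 + u ^ 2 * lam i)⁻¹)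
        = fun _ : Fin d => (1:ℝ) := funext fun i => mul_inv_cancel₀ (hE u i).ne'
    rw [h2, Matrix.diagonal_one, Matrix.mul_one, hUU]
  have hquad : ∀ (u : ℝ) (c : Fin d → ℝ),
      c ⬝ᵥ ((1 : Matrix (Fin d) (Fin d) ℝ) + u ^ 2 • D)⁻¹ *ᵥ c
        = ∑ i, (1 + u ^ 2 * lam i)⁻¹ * ((star U *ᵥ c) i) ^ 2 := by
    intro u c
    rw [hAinv u, ← Matrix.mulVec_mulVec, ← Matrix.mulVec_mulVec, Matrix.dotProduct_mulVec]
    have hvm : c ᵥ* U = star U *ᵥ c := by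
      rw [← Matrix.mulVec_transpose]
      congr 1
    rw [hvm]
    simp only [dotProduct, Matrix.mulVec_diagonal]
    exact Finset.sum_congr rfl fun i _ => by ring
  -- product form of the integrand
  have hgprod : ∀ (h : Fin d → ℝ) (u b : ℝ),
      (Real.sqrt ((1 + u ^ 2 • D).det))⁻¹ *
        Real.exp (-(b * ((h - u • μ) ⬝ᵥ ((1 + u ^ 2 • D)⁻¹).mulVec (h - u • μ))))
      = ∏ i, ((Real.sqrt (1 + u ^ 2 * lam i))⁻¹ *
          Real.exp (-(b * ((1 + u ^ 2 * lam i)⁻¹ * ((star U *ᵥ (h - u • μ)) i) ^ 2)))) := by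
    intro h u b
    rw [hdet, hquad, sqrt_prod' _ (fun i => (hE u i).le), ← Finset.prod_inv_distrib,
      Finset.mul_sum, ← Finset.sum_neg_distrib, Real.exp_sum, ← Finset.prod_mul_distrib]
  constructor
  · -- symmetry
    rintro ⟨x, s⟩ ⟨y, t⟩
    simp only
    rw [hC, hC]
    rw [show y - x = -(x - y) from (neg_sub x y).symm,
      show t - s = -(s - t) from (neg_sub s t).symm]
    simp only [neg_sq]
    have hv : -(x - y) - -(s - t) • μ = -((x - y) - (s - t) • μ) := by
      rw [neg_smul]; abel
    rw [hv]
    have hneg : ∀ (M : Matrix (Fin d) (Fin d) ℝ) (v : Fin d → ℝ),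
        (-v) ⬝ᵥ M *ᵥ (-v) = v ⬝ᵥ M *ᵥ v := by
      intro M v
      rw [Matrix.mulVec_neg, dotProduct_neg, neg_dotProduct, neg_neg]
    rw [hneg]
  · -- positive definiteness
    intro n pts c
    simp only
    obtain ⟨F, hFfin, hFneg, hφF⟩ := hφ
    have hae : ∀ᵐ a ∂F, (0:ℝ) ≤ a := by
      rw [MeasureTheory.ae_iff]
      convert hFneg using 2
      ext a; simp
    set w : Fin n → Fin n → Fin d → ℝ :=
      fun p q => star U *ᵥ ((pts p).1 - (pts q).1 - ((pts p).2 - (pts q).2) • μ) with hw_def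
    set G : ℝ → Fin n → Fin n → ℝ := fun b p q =>
      ∏ i, ((Real.sqrt (1 + ((pts p).2 - (pts q).2) ^ 2 * lam i))⁻¹ *
        Real.exp (-(b * ((1 + ((pts p).2 - (pts q).2) ^ 2 * lam i)⁻¹ * (w p q i) ^ 2))))
      with hG_def
    have hQnn : ∀ p q : Fin n,
        0 ≤ ((pts p).1 - (pts q).1 - ((pts p).2 - (pts q).2) • μ) ⬝ᵥ
          ((1 + ((pts p).2 - (pts q).2) ^ 2 • D)⁻¹).mulVec
            ((pts p).1 - (pts q).1 - ((pts p).2 - (pts q).2) • μ) := by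
      intro p q
      rw [hquad]
      refine Finset.sum_nonneg fun i _ => ?_
      have := hE ((pts p).2 - (pts q).2) i
      positivity
    have hker : ∀ p q : Fin n,
        C ((pts p).1 - (pts q).1) ((pts p).2 - (pts q).2) = ∫ a, G a p q ∂F := by
      intro p q
      rw [hC, hφF _ (Real.sqrt_nonneg _)]
      simp only [Real.sq_sqrt (hQnn p q)]
      rw [← MeasureTheory.integral_const_mul]
      congr 1
      funext a
      exact hgprod _ _ a
    have hGcont : ∀ p q : Fin n, Continuous fun b : ℝ => G b p q := by
      intro p q
      simp only [hG_def]
      apply continuous_finset_prod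
      intro i _
      exact continuous_const.mul
        (Real.continuous_exp.comp ((continuous_id.mul continuous_const).neg))
    have hGnonneg : ∀ (b : ℝ) (p q : Fin n), 0 ≤ G b p q := fun b p q =>
      Finset.prod_nonneg fun i _ =>
        mul_nonneg (inv_nonneg.2 (Real.sqrt_nonneg _)) (Real.exp_pos _).le
    have hGle : ∀ (b : ℝ), 0 ≤ b → ∀ (p q : Fin n), G b p q ≤
        ∏ i, (Real.sqrt (1 + ((pts p).2 - (pts q).2) ^ 2 * lam i))⁻¹ := by
      intro b hb p q
      refine Finset.prod_le_prod (fun i _ =>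
        mul_nonneg (inv_nonneg.2 (Real.sqrt_nonneg _)) (Real.exp_pos _).le) fun i _ => ?_
      have h1 : Real.exp
          (-(b * ((1 + ((pts p).2 - (pts q).2) ^ 2 * lam i)⁻¹ * (w p q i) ^ 2))) ≤ 1 := by
        rw [Real.exp_le_one_iff]
        have h2 : (0:ℝ) ≤ b * ((1 + ((pts p).2 - (pts q).2) ^ 2 * lam i)⁻¹ * (w p q i) ^ 2) := by
          have := hE ((pts p).2 - (pts q).2) i
          positivity
        linarith
      calc (Real.sqrt (1 + ((pts p).2 - (pts q).2) ^ 2 * lam i))⁻¹ *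
            Real.exp (-(b * ((1 + ((pts p).2 - (pts q).2) ^ 2 * lam i)⁻¹ * (w p q i) ^ 2)))
          ≤ (Real.sqrt (1 + ((pts p).2 - (pts q).2) ^ 2 * lam i))⁻¹ * 1 :=
            mul_le_mul_of_nonneg_left h1 (inv_nonneg.2 (Real.sqrt_nonneg _))
        _ = _ := mul_one _
    have hGint : ∀ p q : Fin n, Integrable (fun a => G a p q) F := by
      intro p q
      refine Integrable.mono'
        (integrable_const (∏ i, (Real.sqrt (1 + ((pts p).2 - (pts q).2) ^ 2 * lam i))⁻¹))
        ((hGcont p q).aestronglyMeasurable) ?_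
      filter_upwards [hae] with a ha0
      rw [Real.norm_eq_abs, abs_of_nonneg (hGnonneg a p q)]
      exact hGle a ha0 p q
    -- main positivity of the quadratic form of G for fixed a > 0
    have hSpos : ∀ a : ℝ, 0 < a → 0 ≤ ∑ p, ∑ q, c p * c q * G a p q := by
      intro a hapos
      have hfac : ∀ p q : Fin n, G a p q = ∫ z : Fin d → ℝ,
          ∏ i, (Real.exp (-(a * (w p q i - ((pts p).2 - (pts q).2) * z i) ^ 2)) *
            (Real.sqrt (a / (π * lam i)) * Real.exp (-(a * (z i) ^ 2 / lam i)))) := by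
        intro p q
        calc G a p q
            = ∏ i, ∫ t : ℝ,
              Real.exp (-(a * (w p q i - ((pts p).2 - (pts q).2) * t) ^ 2)) *
                (Real.sqrt (a / (π * lam i)) * Real.exp (-(a * t ^ 2 / lam i))) :=
              Finset.prod_congr rfl fun i _ => (mixture_integral hapos (hlam i)).symm
          _ = _ := (MeasureTheory.integral_fintype_prod_eq_prod (ι := Fin d)
              (fun i t => Real.exp (-(a * (w p q i - ((pts p).2 - (pts q).2) * t) ^ 2)) *
                (Real.sqrt (a / (π * lam i)) * Real.exp (-(a * t ^ 2 / lam i))))).symm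
      have hint1 : ∀ (W V : ℝ) (i : Fin d), Integrable (fun t : ℝ =>
          Real.exp (-(a * (W - V * t) ^ 2)) *
            (Real.sqrt (a / (π * lam i)) * Real.exp (-(a * t ^ 2 / lam i)))) := by
        intro W V i
        have hg0 : Integrable (fun t : ℝ => Real.exp (-(a / lam i) * t ^ 2)) :=
          integrable_exp_neg_mul_sq (by have := hlam i; positivity)
        have hg : Integrable (fun t : ℝ =>
            Real.sqrt (a / (π * lam i)) * Real.exp (-(a * t ^ 2 / lam i))) := by
          have heq : (fun t : ℝ => Real.sqrt (a / (π * lam i)) * Real.exp (-(a * t ^ 2 / lam i)))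
              = fun t : ℝ => Real.sqrt (a / (π * lam i)) * Real.exp (-(a / lam i) * t ^ 2) := by
            funext t
            rw [show -(a / lam i) * t ^ 2 = -(a * t ^ 2 / lam i) by ring]
          rw [heq]
          exact hg0.const_mul _
        refine hg.mono' ?_ (Filter.Eventually.of_forall fun t => ?_)
        · apply Continuous.aestronglyMeasurable
          fun_prop
        · rw [Real.norm_eq_abs, abs_of_nonneg (by positivity)]
          calc Real.exp (-(a * (W - V * t) ^ 2)) *
                (Real.sqrt (a / (π * lam i)) * Real.exp (-(a * t ^ 2 / lam i)))
              ≤ 1 * (Real.sqrt (a / (π * lam i)) * Real.exp (-(a * t ^ 2 / lam i))) := by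
                refine mul_le_mul_of_nonneg_right ?_ (by positivity)
                rw [Real.exp_le_one_iff]
                have : (0:ℝ) ≤ a * (W - V * t) ^ 2 := by positivity
                linarith
            _ = _ := one_mul _
      have hintpair : ∀ p q : Fin n, Integrable (fun z : Fin d → ℝ =>
          ∏ i, (Real.exp (-(a * (w p q i - ((pts p).2 - (pts q).2) * z i) ^ 2)) *
            (Real.sqrt (a / (π * lam i)) * Real.exp (-(a * (z i) ^ 2 / lam i))))) :=
        fun p q => MeasureTheory.Integrable.fintype_prod fun i => hint1 _ _ i
      have hswap : (∑ p, ∑ q, c p * c q * G a p q)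
          = ∫ z : Fin d → ℝ, ∑ p, ∑ q, c p * c q *
              ∏ i, (Real.exp (-(a * (w p q i - ((pts p).2 - (pts q).2) * z i) ^ 2)) *
                (Real.sqrt (a / (π * lam i)) * Real.exp (-(a * (z i) ^ 2 / lam i)))) := by
        have h1 : ∀ p q : Fin n, c p * c q * G a p q
            = ∫ z : Fin d → ℝ, c p * c q *
              ∏ i, (Real.exp (-(a * (w p q i - ((pts p).2 - (pts q).2) * z i) ^ 2)) *
                (Real.sqrt (a / (π * lam i)) * Real.exp (-(a * (z i) ^ 2 / lam i)))) := by
          intro p q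
          rw [hfac p q, ← MeasureTheory.integral_const_mul]
        simp_rw [h1]
        calc ∑ p, ∑ q, (∫ z : Fin d → ℝ, c p * c q *
              ∏ i, (Real.exp (-(a * (w p q i - ((pts p).2 - (pts q).2) * z i) ^ 2)) *
                (Real.sqrt (a / (π * lam i)) * Real.exp (-(a * (z i) ^ 2 / lam i)))))
            = ∑ p, ∫ z : Fin d → ℝ, ∑ q, c p * c q *
              ∏ i, (Real.exp (-(a * (w p q i - ((pts p).2 - (pts q).2) * z i) ^ 2)) *
                (Real.sqrt (a / (π * lam i)) * Real.exp (-(a * (z i) ^ 2 / lam i)))) :=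
              Finset.sum_congr rfl fun p _ =>
                (MeasureTheory.integral_finset_sum _ fun q _ =>
                  ((hintpair p q).const_mul _)).symm
          _ = _ := (MeasureTheory.integral_finset_sum _ fun p _ =>
              MeasureTheory.integrable_finset_sum _ fun q _ =>
                ((hintpair p q).const_mul _)).symm
      rw [hswap]
      refine MeasureTheory.integral_nonneg fun z => ?_
      -- pointwise positivity via the Gaussian kernel
      have hwi : ∀ (p q : Fin n) (i : Fin d),
          w p q i - ((pts p).2 - (pts q).2) * z i
          = ((star U *ᵥ (pts p).1) i - (pts p).2 * ((star U *ᵥ μ) i + z i))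
            - ((star U *ᵥ (pts q).1) i - (pts q).2 * ((star U *ᵥ μ) i + z i)) := by
        intro p q i
        simp only [hw_def, Matrix.mulVec_sub, Matrix.mulVec_smul, Pi.sub_apply, Pi.smul_apply,
          smul_eq_mul]
        ring
      have hfactor : ∀ p q : Fin n,
          (∏ i, (Real.exp (-(a * (w p q i - ((pts p).2 - (pts q).2) * z i) ^ 2)) *
            (Real.sqrt (a / (π * lam i)) * Real.exp (-(a * (z i) ^ 2 / lam i)))))
          = (∏ i, (Real.sqrt (a / (π * lam i)) * Real.exp (-(a * (z i) ^ 2 / lam i)))) *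
            Real.exp (-(a * ∑ i,
              (((star U *ᵥ (pts p).1) i - (pts p).2 * ((star U *ᵥ μ) i + z i))
                - ((star U *ᵥ (pts q).1) i - (pts q).2 * ((star U *ᵥ μ) i + z i))) ^ 2)) := by
        intro p q
        rw [Finset.prod_mul_distrib, mul_comm]
        congr 1
        rw [← Real.exp_sum]
        congr 1
        rw [Finset.mul_sum, ← Finset.sum_neg_distrib]
        refine Finset.sum_congr rfl fun i _ => ?_
        rw [hwi p q i]
      simp only [hfactor]
      have hrearr : ∀ p q : Fin n, c p * c q *
          ((∏ i, (Real.sqrt (a / (π * lam i)) * Real.exp (-(a * (z i) ^ 2 / lam i)))) *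
            Real.exp (-(a * ∑ i,
              (((star U *ᵥ (pts p).1) i - (pts p).2 * ((star U *ᵥ μ) i + z i))
                - ((star U *ᵥ (pts q).1) i - (pts q).2 * ((star U *ᵥ μ) i + z i))) ^ 2)))
          = (∏ i, (Real.sqrt (a / (π * lam i)) * Real.exp (-(a * (z i) ^ 2 / lam i)))) *
            (c p * c q * Real.exp (-(a * ∑ i,
              (((star U *ᵥ (pts p).1) i - (pts p).2 * ((star U *ᵥ μ) i + z i))
                - ((star U *ᵥ (pts q).1) i - (pts q).2 * ((star U *ᵥ μ) i + z i))) ^ 2))) :=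
        fun p q => by ring
      simp only [hrearr, ← Finset.mul_sum]
      refine mul_nonneg (Finset.prod_nonneg fun i _ => by positivity) ?_
      exact gaussian_kernel_pd hapos.le
        (fun p i => (star U *ᵥ (pts p).1) i - (pts p).2 * ((star U *ᵥ μ) i + z i)) c
    -- extend to a = 0 by continuity
    have hS : ∀ a : ℝ, 0 ≤ a → 0 ≤ ∑ p, ∑ q, c p * c q * G a p q := by
      intro a ha0
      rcases ha0.lt_or_eq with h | h
      · exact hSpos a h
      · have hcont : Continuous fun b : ℝ => ∑ p, ∑ q, c p * c q * G b p q := by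
          apply continuous_finset_sum
          intro p _
          apply continuous_finset_sum
          intro q _
          exact continuous_const.mul (hGcont p q)
        have htend : Filter.Tendsto (fun b : ℝ => ∑ p, ∑ q, c p * c q * G b p q)
            (nhdsWithin 0 (Set.Ioi 0)) (nhds (∑ p, ∑ q, c p * c q * G 0 p q)) :=
          (hcont.tendsto 0).mono_left nhdsWithin_le_nhds
        rw [← h]
        refine ge_of_tendsto htend ?_
        filter_upwards [self_mem_nhdsWithin] with b hb
        exact hSpos b hb
    calc (0:ℝ) ≤ ∫ a, ∑ p, ∑ q, c p * c q * G a p q ∂F := by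
          refine MeasureTheory.integral_nonneg_of_ae ?_
          filter_upwards [hae] with a ha0
          exact hS a ha0
      _ = ∑ p, ∑ q, c p * c q * C ((pts p).1 - (pts q).1) ((pts p).2 - (pts q).2) := by
          rw [MeasureTheory.integral_finset_sum _ (fun p _ =>
            integrable_finset_sum _ fun q _ => (hGint p q).const_mul _)]
          refine Finset.sum_congr rfl fun p _ => ?_
          rw [MeasureTheory.integral_finset_sum _ (fun q _ => (hGint p q).const_mul _)]
          refine Finset.sum_congr rfl fun q _ => ?_
          rw [MeasureTheory.integral_const_mul, hker p q]
end

section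
/- Let d be a positive integer, A ∈ Matrix (Fin d) (Fin d) ℝ symmetric, z, h ∈ ℝ^d, and u ∈ ℝ. Set B = A h hᵀ A and f(v) = vᵀ A v + zᵀ v for v ∈ ℝ^d. Then (2/π)^{d/2} · ∫_{ℝ^d} exp(−‖v‖² − ‖v + h‖²) · exp( −( f(v) − f(v+h) − u )² ) dv = det(I + 2B)^{−1/2} · exp( −( ‖h‖²/2 + (zᵀh + u)² · (1 − 2 hᵀ A (I + 2B)⁻¹ A h) ) ), where I is the d×d identity matrix and the integral is with respect to Lebesgue measure on ℝ^d. -/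
open scoped Matrix BigOperators
open MeasureTheory

open Real in
lemma oned (r c : ℝ) :
    ∫ t : ℝ, Real.exp (-2 * t ^ 2 - (2 * r * t + c) ^ 2)
      = Real.sqrt (π / (2 + 4 * r ^ 2)) * Real.exp (-c ^ 2 / (1 + 2 * r ^ 2)) := by
  have hb : (0:ℝ) < 2 + 4 * r ^ 2 := by positivity
  have h1 : (0:ℝ) < 1 + 2 * r ^ 2 := by positivity
  have key : ∀ t : ℝ, Real.exp (-2 * t ^ 2 - (2 * r * t + c) ^ 2)
      = Real.exp (-(2 + 4 * r ^ 2) * (t + 2 * r * c / (2 + 4 * r ^ 2)) ^ 2)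
        * Real.exp (-c ^ 2 / (1 + 2 * r ^ 2)) := by
    intro t
    rw [← Real.exp_add]
    congr 1
    field_simp
    ring
  simp_rw [key]
  rw [integral_mul_const, integral_add_right_eq_self
    (fun t : ℝ => Real.exp (-(2 + 4 * r ^ 2) * t ^ 2)) (2 * r * c / (2 + 4 * r ^ 2)),
    integral_gaussian]

open Real in
lemma core (d : ℕ) (hd : 0 < d) (g : Fin d → ℝ) (c : ℝ) :
    ∫ w : Fin d → ℝ, Real.exp (-2 * ∑ i, w i ^ 2 - (2 * (g ⬝ᵥ w) + c) ^ 2)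
      = Real.sqrt ((π / 2) ^ d) * (Real.sqrt (1 + 2 * (g ⬝ᵥ g)))⁻¹
          * Real.exp (-c ^ 2 / (1 + 2 * (g ⬝ᵥ g))) := by
  classical
  set i0 : Fin d := ⟨0, hd⟩
  set g' : EuclideanSpace ℝ (Fin d) := (EuclideanSpace.equiv (Fin d) ℝ).symm g with hg'
  have hg'app : ∀ i, g' i = g i := fun i => rfl
  -- a basis adapted to g'
  obtain ⟨b, hb⟩ : ∃ b : OrthonormalBasis (Fin d) ℝ (EuclideanSpace ℝ (Fin d)),
      ∀ w : EuclideanSpace ℝ (Fin d), (inner ℝ g' w : ℝ) = ‖g'‖ * b.repr w i0 := by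
    rcases eq_or_ne g' 0 with h0 | h0
    · exact ⟨EuclideanSpace.basisFun (Fin d) ℝ, fun w => by simp [h0]⟩
    · have hcard : Module.finrank ℝ (EuclideanSpace ℝ (Fin d)) = Fintype.card (Fin d) := by
        simp [finrank_euclideanSpace]
      have horth : Orthonormal ℝ (({i0} : Set (Fin d)).restrict fun _ => ‖g'‖⁻¹ • g') := by
        constructor
        · intro i
          show ‖‖g'‖⁻¹ • g'‖ = 1
          rw [norm_smul, norm_inv, norm_norm, inv_mul_cancel₀ (norm_ne_zero_iff.mpr h0)]
        · intro i j hij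
          exact absurd (Subsingleton.elim i j) hij
      obtain ⟨b, hb0⟩ := horth.exists_orthonormalBasis_extension_of_card_eq hcard
      refine ⟨b, fun w => ?_⟩
      have hbi0 : b i0 = ‖g'‖⁻¹ • g' := hb0 i0 rfl
      rw [b.repr_apply_apply, hbi0, real_inner_smul_left]
      have : ‖g'‖ ≠ 0 := norm_ne_zero_iff.mpr h0
      field_simp
  -- norm of g'
  set r : ℝ := ‖g'‖ with hr
  have hrs : r ^ 2 = g ⬝ᵥ g := by
    rw [hr, ← real_inner_self_eq_norm_sq, dotProduct]
    rw [PiLp.inner_apply]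
    simp [RCLike.inner_apply, hg'app, sq]
  have hs0 : (0:ℝ) ≤ g ⬝ᵥ g := by rw [← hrs]; positivity
  have h12 : (0:ℝ) < 1 + 2 * (g ⬝ᵥ g) := by linarith
  have me := EuclideanSpace.volume_preserving_symm_measurableEquiv_toLp (Fin d)
  have hemb := (MeasurableEquiv.toLp 2 (Fin d → ℝ)).symm.measurableEmbedding
  have hnorm : ∀ x : EuclideanSpace ℝ (Fin d), ‖x‖ ^ 2 = ∑ i, x i ^ 2 := by
    intro x
    rw [EuclideanSpace.norm_eq, Real.sq_sqrt (by positivity)]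
    simp [Real.norm_eq_abs, sq_abs]
  have hinner : ∀ x : EuclideanSpace ℝ (Fin d), (inner ℝ g' x : ℝ) = ∑ i, g i * x i := by
    intro x
    rw [PiLp.inner_apply]
    simp [RCLike.inner_apply, hg'app]
    exact Finset.sum_congr rfl fun i _ => mul_comm _ _
  calc ∫ w : Fin d → ℝ, Real.exp (-2 * ∑ i, w i ^ 2 - (2 * (g ⬝ᵥ w) + c) ^ 2)
      = ∫ x : EuclideanSpace ℝ (Fin d), Real.exp (-2 * ‖x‖ ^ 2 - (2 * (inner ℝ g' x : ℝ) + c) ^ 2) := by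
        rw [← me.integral_comp hemb]
        congr 1
        ext x
        rw [hnorm, hinner]
        rfl
    _ = ∫ y : EuclideanSpace ℝ (Fin d),
          Real.exp (-2 * ‖y‖ ^ 2 - (2 * (r * y i0) + c) ^ 2) := by
        rw [← b.measurePreserving_repr_symm.integral_comp
          b.repr.symm.toHomeomorph.measurableEmbedding]
        congr 1
        ext y
        rw [hb, b.repr.symm.norm_map, LinearIsometryEquiv.apply_symm_apply]
    _ = ∫ z : Fin d → ℝ, Real.exp (-2 * ∑ i, z i ^ 2 - (2 * (r * z i0) + c) ^ 2) := by
        rw [← me.integral_comp hemb]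
        congr 1
        ext y
        rw [hnorm]
        rfl
    _ = ∫ z : Fin d → ℝ, ∏ i, (Real.exp (-2 * z i ^ 2) *
          (if i = i0 then Real.exp (-(2 * r * z i + c) ^ 2) else 1)) := by
        congr 1
        ext z
        rw [Finset.prod_mul_distrib, ← Real.exp_sum, Finset.prod_ite_eq' Finset.univ i0
          (fun i => Real.exp (-(2 * r * z i + c) ^ 2)), if_pos (Finset.mem_univ i0),
          ← Real.exp_add]
        congr 1
        rw [← Finset.mul_sum]
        ring
    _ = ∏ i : Fin d, ∫ t : ℝ, Real.exp (-2 * t ^ 2) *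
          (if i = i0 then Real.exp (-(2 * r * t + c) ^ 2) else 1) := by
        exact MeasureTheory.integral_fintype_prod_eq_prod (ι := Fin d)
          (fun i t => Real.exp (-2 * t ^ 2) * (if i = i0 then Real.exp (-(2 * r * t + c) ^ 2) else 1))
    _ = (Real.sqrt (π / (2 + 4 * r ^ 2)) * Real.exp (-c ^ 2 / (1 + 2 * r ^ 2)))
          * Real.sqrt (π / 2) ^ (d - 1) := by
        have hint : ∀ i : Fin d, (∫ t : ℝ, Real.exp (-2 * t ^ 2) *
            (if i = i0 then Real.exp (-(2 * r * t + c) ^ 2) else 1))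
            = if i = i0 then Real.sqrt (π / (2 + 4 * r ^ 2)) * Real.exp (-c ^ 2 / (1 + 2 * r ^ 2))
              else Real.sqrt (π / 2) := by
          intro i
          split_ifs with hi
          · rw [← oned r c]
            congr 1
            funext t
            rw [← Real.exp_add, ← sub_eq_add_neg]
          · simp only [mul_one]
            exact integral_gaussian 2
        rw [Finset.prod_congr rfl (fun i _ => hint i),
          ← Finset.mul_prod_erase Finset.univ _ (Finset.mem_univ i0), if_pos rfl,
          Finset.prod_congr rfl (fun i hi => if_neg (Finset.ne_of_mem_erase hi)),
          Finset.prod_const, Finset.card_erase_of_mem (Finset.mem_univ i0),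
          Finset.card_univ, Fintype.card_fin]
    _ = Real.sqrt ((π / 2) ^ d) * (Real.sqrt (1 + 2 * (g ⬝ᵥ g)))⁻¹
          * Real.exp (-c ^ 2 / (1 + 2 * (g ⬝ᵥ g))) := by
        rw [← hrs]
        have hpi : (0:ℝ) < π / 2 := by positivity
        have h12' : (0:ℝ) < 1 + 2 * r ^ 2 := by positivity
        have e1 : π / (2 + 4 * r ^ 2) = (π / 2) * (1 + 2 * r ^ 2)⁻¹ := by
          rw [div_eq_iff (by positivity : (2 + 4 * r ^ 2 : ℝ) ≠ 0)]
          have h2 : (2 * (1 + 2 * r ^ 2) : ℝ) = 2 + 4 * r ^ 2 := by ring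
          field_simp [h2]
          ring
        have hsp : Real.sqrt ((π / 2) ^ d) = Real.sqrt (π / 2) ^ d := by
          rw [show ((π / 2 : ℝ)) ^ d = (Real.sqrt (π / 2) ^ d) ^ 2 by
              rw [← pow_mul, mul_comm d 2, pow_mul, Real.sq_sqrt hpi.le],
            Real.sqrt_sq (by positivity)]
        have hps : Real.sqrt (π / 2) * Real.sqrt (π / 2) ^ (d - 1) = Real.sqrt (π / 2) ^ d := by
          rw [← pow_succ']
          congr 1
          omega
        rw [e1, Real.sqrt_mul hpi.le, Real.sqrt_inv, hsp, ← hps]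
        ring


/-- Explicit covariance of the moving-average model (Example 13):
with `f(v) = vᵀ A v + zᵀ v` and `B = A h hᵀ A`,
`(2/π)^{d/2} ∫ exp(−‖v‖² − ‖v+h‖²) exp(−(f(v) − f(v+h) − u)²) dv
  = det(I + 2B)^{−1/2} exp(−(‖h‖²/2 + (zᵀh + u)² (1 − 2 hᵀ A (I + 2B)⁻¹ A h)))`. -/
theorem moving_average_gaussian_integral (d : ℕ) (hd : 0 < d)
    (A : Matrix (Fin d) (Fin d) ℝ) (hA : A.IsSymm) (z h : Fin d → ℝ) (u : ℝ)
    (B : Matrix (Fin d) (Fin d) ℝ) (hB : B = A * Matrix.vecMulVec h h * A)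
    (f : (Fin d → ℝ) → ℝ) (hf : ∀ v, f v = v ⬝ᵥ A.mulVec v + z ⬝ᵥ v) :
    Real.sqrt ((2 / Real.pi) ^ d) *
        ∫ v : Fin d → ℝ,
          Real.exp (-(∑ i, v i ^ 2) - (∑ i, (v i + h i) ^ 2)) *
            Real.exp (-(f v - f (v + h) - u) ^ 2) =
      (Real.sqrt ((1 + 2 • B).det))⁻¹ *
        Real.exp (-((∑ i, h i ^ 2) / 2 +
          (z ⬝ᵥ h + u) ^ 2 * (1 - 2 * (h ⬝ᵥ (A * (1 + 2 • B)⁻¹ * A).mulVec h)))) := by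
  classical
  set g : Fin d → ℝ := A.mulVec h with hg
  set c : ℝ := z ⬝ᵥ h + u with hc
  set s : ℝ := g ⬝ᵥ g with hsdef
  have hs0 : (0:ℝ) ≤ s := by
    rw [hsdef, dotProduct]
    exact Finset.sum_nonneg fun i _ => mul_self_nonneg _
  have h12 : (0:ℝ) < 1 + 2 * s := by linarith
  have hAg : ∀ v : Fin d → ℝ, h ⬝ᵥ A.mulVec v = g ⬝ᵥ v := by
    intro v
    rw [Matrix.dotProduct_mulVec, hg]
    congr 1
    conv_lhs => rw [← hA]
    exact Matrix.vecMul_transpose A h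
  have hBg : B = Matrix.vecMulVec g g := by
    rw [hB]
    ext i j
    simp only [Matrix.mul_apply, Matrix.vecMulVec_apply, hg, Matrix.mulVec, dotProduct,
      Finset.sum_mul, Finset.mul_sum]
    refine Finset.sum_congr rfl fun y _ => Finset.sum_congr rfl fun x _ => ?_
    rw [hA.apply j y]
    ring
  have h2Bs : (2 • B : Matrix (Fin d) (Fin d) ℝ) = (2:ℝ) • B := by ext i j; simp
  have hdet : (1 + 2 • B).det = 1 + 2 * s := by
    have hform : (1 + 2 • B : Matrix (Fin d) (Fin d) ℝ)
        = 1 + Matrix.replicateCol (Fin 1) (fun i => 2 * g i) * Matrix.replicateRow (Fin 1) g := by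
      rw [h2Bs]
      ext i j
      simp only [Matrix.add_apply, Matrix.smul_apply, hBg, Matrix.vecMulVec_apply,
        Matrix.mul_apply, Matrix.replicateCol_apply, Matrix.replicateRow_apply, Finset.univ_unique,
        Finset.sum_singleton, smul_eq_mul]
      ring
    rw [hform]
    erw [Matrix.det_one_add_replicateCol_mul_replicateRow]
    rw [hsdef, dotProduct, dotProduct, Finset.mul_sum]
    congr 1
    exact Finset.sum_congr rfl fun i _ => by ring
  have hBv : B.mulVec g = s • g := by
    funext i
    rw [hBg]
    simp only [Matrix.mulVec, dotProduct, Matrix.vecMulVec_apply, Pi.smul_apply,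
      smul_eq_mul, mul_assoc, ← Finset.mul_sum]
    rw [hsdef, dotProduct]
    ring
  have hMg : (1 + 2 • B).mulVec ((1 + 2 * s)⁻¹ • g) = g := by
    rw [Matrix.mulVec_smul, h2Bs, Matrix.add_mulVec, Matrix.one_mulVec,
      Matrix.smul_mulVec, hBv]
    funext i
    simp only [Pi.smul_apply, Pi.add_apply, smul_eq_mul]
    field_simp
  have hU : IsUnit (1 + 2 • B).det := by
    rw [hdet]
    exact isUnit_iff_ne_zero.mpr h12.ne'
  have hinv : (1 + 2 • B)⁻¹.mulVec g = (1 + 2 * s)⁻¹ • g := by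
    conv_lhs => rw [← hMg]
    rw [Matrix.mulVec_mulVec, Matrix.nonsing_inv_mul _ hU, Matrix.one_mulVec]
  have hquad : h ⬝ᵥ (A * (1 + 2 • B)⁻¹ * A).mulVec h = (1 + 2 * s)⁻¹ * s := by
    rw [← Matrix.mulVec_mulVec, ← Matrix.mulVec_mulVec, ← hg, hinv, hAg,
      dotProduct_smul, smul_eq_mul, ← hsdef]
  have key : ∀ v : Fin d → ℝ,
      Real.exp (-(∑ i, v i ^ 2) - (∑ i, (v i + h i) ^ 2)) * Real.exp (-(f v - f (v + h) - u) ^ 2)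
      = Real.exp (-(∑ i, h i ^ 2) / 2) *
          Real.exp (-2 * ∑ i, (v + (2⁻¹:ℝ) • h) i ^ 2
            - (2 * (g ⬝ᵥ (v + (2⁻¹:ℝ) • h)) + c) ^ 2) := by
    intro v
    have hvg : v ⬝ᵥ (A.mulVec h) = g ⬝ᵥ v := by rw [← hg, dotProduct_comm]
    have E1 : f v - f (v + h) - u = -(2 * (g ⬝ᵥ v) + g ⬝ᵥ h + c) := by
      simp only [hf, hc, Matrix.mulVec_add, dotProduct_add, add_dotProduct,
        hAg, hvg]
      ring
    have E2 : g ⬝ᵥ (v + (2⁻¹:ℝ) • h) = g ⬝ᵥ v + 2⁻¹ * (g ⬝ᵥ h) := by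
      simp only [dotProduct_add, dotProduct_smul, smul_eq_mul]
    have E3 : (∑ i, v i ^ 2) + (∑ i, (v i + h i) ^ 2)
        = 2 * (∑ i, (v + (2⁻¹:ℝ) • h) i ^ 2) + (∑ i, h i ^ 2) / 2 := by
      simp only [Pi.add_apply, Pi.smul_apply, smul_eq_mul]
      rw [Finset.mul_sum, Finset.sum_div, ← Finset.sum_add_distrib, ← Finset.sum_add_distrib]
      exact Finset.sum_congr rfl fun i _ => by ring
    rw [← Real.exp_add, ← Real.exp_add, E1, E2]
    congr 1
    linear_combination -E3
  rw [show (∫ v : Fin d → ℝ,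
      Real.exp (-(∑ i, v i ^ 2) - (∑ i, (v i + h i) ^ 2)) *
        Real.exp (-(f v - f (v + h) - u) ^ 2))
      = Real.exp (-(∑ i, h i ^ 2) / 2) *
        ∫ w : Fin d → ℝ, Real.exp (-2 * ∑ i, w i ^ 2 - (2 * (g ⬝ᵥ w) + c) ^ 2) from by
    simp_rw [key]
    rw [MeasureTheory.integral_const_mul]
    congr 1
    exact integral_add_right_eq_self
      (fun w : Fin d → ℝ => Real.exp (-2 * ∑ i, w i ^ 2 - (2 * (g ⬝ᵥ w) + c) ^ 2))
      ((2⁻¹:ℝ) • h)]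
  rw [core d hd g c, hdet, hquad, ← hsdef]
  have hexp : (1:ℝ) - 2 * ((1 + 2 * s)⁻¹ * s) = (1 + 2 * s)⁻¹ := by
    field_simp [h12.ne']
    ring
  have hsqrt1 : Real.sqrt ((2 / Real.pi) ^ d) * Real.sqrt ((Real.pi / 2) ^ d) = 1 := by
    rw [← Real.sqrt_mul (by positivity), ← mul_pow]
    have h21 : (2 / Real.pi) * (Real.pi / 2) = 1 := by
      field_simp
    rw [h21, one_pow, Real.sqrt_one]
  rw [hexp, show -((∑ i, h i ^ 2) / 2 + c ^ 2 * (1 + 2 * s)⁻¹)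
      = -(∑ i, h i ^ 2) / 2 + -c ^ 2 / (1 + 2 * s) from by field_simp; ring, Real.exp_add]
  linear_combination ((Real.sqrt (1 + 2 * s))⁻¹ * Real.exp (-(∑ i, h i ^ 2) / 2)
    * Real.exp (-c ^ 2 / (1 + 2 * s))) * hsqrt1
end

section
/- Let d be a positive integer, S, T ∈ Matrix (Fin d) (Fin d) ℝ symmetric strictly positive definite, M ∈ Matrix (Fin d) (Fin d) ℝ symmetric, h ∈ ℝ^d and c ∈ ℝ. Set m₀ = hᵀ M h, A = S + T + 4 M h hᵀ M, and μ = −A⁻¹ (T + 2(m₀ − c) M) h. Then π^{−d/2} · ∫_{ℝ^d} exp( −wᵀ S w − (w + h)ᵀ T (w + h) − ( wᵀ M w − (w+h)ᵀ M (w+h) + c )² ) dw = det(A)^{−1/2} · exp( −( hᵀ T h + (m₀ − c)² − μᵀ A μ ) ), where the integral is with respect to Lebesgue measure on ℝ^d. -/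
open scoped Matrix BigOperators
open MeasureTheory

namespace SPGIAux
variable {d : ℕ}
lemma dot_symm {X : Matrix (Fin d) (Fin d) ℝ} (hX : X.IsSymm) (u v : Fin d → ℝ) :
    u ⬝ᵥ X.mulVec v = v ⬝ᵥ X.mulVec u := by
  rw [Matrix.dotProduct_mulVec, ← Matrix.mulVec_transpose, hX.eq, dotProduct_comm]
lemma vecMulVec_mulVec' (h x : Fin d → ℝ) :
    (Matrix.vecMulVec h h).mulVec x = (h ⬝ᵥ x) • h := by
  ext i
  simp [Matrix.mulVec, Matrix.vecMulVec_apply, dotProduct, Finset.mul_sum,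
    Finset.sum_mul, mul_comm, mul_left_comm]
lemma integral_exp_neg_dot :
    ∫ v : Fin d → ℝ, Real.exp (-(v ⬝ᵥ v)) = Real.sqrt Real.pi ^ d := by
  have key : ∀ v : Fin d → ℝ, Real.exp (-(v ⬝ᵥ v)) = ∏ i, Real.exp (-(v i) ^ 2) := by
    intro v
    rw [← Real.exp_sum]
    congr 1
    simp [dotProduct, pow_two]
  simp_rw [key]
  rw [MeasureTheory.volume_pi, MeasureTheory.integral_fintype_prod_eq_pow (ι := Fin d) (fun x : ℝ => Real.exp (-x ^ 2))]
  congr 1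
  · simpa using integral_gaussian 1
  · simp

open scoped MatrixOrder in
lemma integral_exp_neg_quadForm (A : Matrix (Fin d) (Fin d) ℝ) (hA : A.PosDef) :
    ∫ w : Fin d → ℝ, Real.exp (-(w ⬝ᵥ A.mulVec w))
      = Real.sqrt Real.pi ^ d / Real.sqrt A.det := by
  classical
  set B := CFC.sqrt A with hBdef
  have hBsd : B.PosSemidef := Matrix.nonneg_iff_posSemidef.mp (CFC.sqrt_nonneg A)
  have hB2 : B * B = A := CFC.sqrt_mul_sqrt_self A hA.posSemidef.nonneg
  have hBsymm : Bᵀ = B := by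
    have := hBsd.1.eq
    rwa [Matrix.conjTranspose_eq_transpose_of_trivial] at this
  have hdetB2 : B.det * B.det = A.det := by rw [← Matrix.det_mul, hB2]
  have hdetBnn : 0 ≤ B.det := by
    rw [hBsd.1.det_eq_prod_eigenvalues]
    exact Finset.prod_nonneg fun i _ => hBsd.eigenvalues_nonneg i
  have hdetA : 0 < A.det := hA.det_pos
  have hdetB : B.det ≠ 0 := fun h0 => by simp [h0] at hdetB2; exact hdetA.ne' hdetB2.symm
  have hsqrtA : Real.sqrt A.det = B.det := by
    rw [← hdetB2]; exact Real.sqrt_mul_self hdetBnn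
  have hq : ∀ w : Fin d → ℝ, w ⬝ᵥ A.mulVec w = (B.mulVec w) ⬝ᵥ (B.mulVec w) := by
    intro w
    rw [← hB2, ← Matrix.mulVec_mulVec, Matrix.dotProduct_mulVec, ← Matrix.mulVec_transpose,
      hBsymm]
  have hdetLin : LinearMap.det (Matrix.toLin' B) ≠ 0 := by
    rwa [LinearMap.det_toLin']
  let e : (Fin d → ℝ) ≃ₗ[ℝ] (Fin d → ℝ) := LinearMap.equivOfDetNeZero _ hdetLin
  have hecoe : ∀ w, e w = B.mulVec w := fun w => rfl
  have hme : MeasurableEmbedding e :=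
    e.toContinuousLinearEquiv.toHomeomorph.measurableEmbedding
  have hmap : Measure.map (⇑e) volume
      = ENNReal.ofReal |B.det|⁻¹ • (volume : Measure (Fin d → ℝ)) := by
    have := Real.map_matrix_volume_pi_eq_smul_volume_pi (M := B) hdetB
    rw [show (⇑e : (Fin d → ℝ) → (Fin d → ℝ)) = ⇑(Matrix.toLin' B) from rfl, this, abs_inv]
  calc ∫ w : Fin d → ℝ, Real.exp (-(w ⬝ᵥ A.mulVec w))
      = ∫ w : Fin d → ℝ, Real.exp (-(e w ⬝ᵥ e w)) := by
        simp_rw [hq, hecoe]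
    _ = ∫ v, Real.exp (-(v ⬝ᵥ v)) ∂(Measure.map (⇑e) volume) := by
        rw [hme.integral_map]
    _ = |B.det|⁻¹ * ∫ v : Fin d → ℝ, Real.exp (-(v ⬝ᵥ v)) := by
        rw [hmap, MeasureTheory.integral_smul_measure, ENNReal.toReal_ofReal (by positivity),
          smul_eq_mul]
    _ = Real.sqrt Real.pi ^ d / Real.sqrt A.det := by
        rw [integral_exp_neg_dot, hsqrtA, abs_of_nonneg hdetBnn]
        ring

end SPGIAux

open SPGIAux in
/-- The Gaussian integral underlying Equation (13) of the paper: with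
`m₀ = hᵀMh`, `A = S + T + 4MhhᵀM` and `μ = −A⁻¹(T + 2(m₀−c)M)h`,
`π^{−d/2} ∫ exp(−wᵀSw − (w+h)ᵀT(w+h) − (wᵀMw − (w+h)ᵀM(w+h) + c)²) dw
  = det(A)^{−1/2} exp(−(hᵀTh + (m₀−c)² − μᵀAμ))`. -/
theorem single_process_gaussian_integral (d : ℕ) (hd : 0 < d)
    (S T M : Matrix (Fin d) (Fin d) ℝ) (hS : S.PosDef) (hT : T.PosDef)
    (hM : M.IsSymm) (h : Fin d → ℝ) (c : ℝ)
    (m₀ : ℝ) (hm₀ : m₀ = h ⬝ᵥ M.mulVec h)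
    (A : Matrix (Fin d) (Fin d) ℝ)
    (hA : A = S + T + 4 • (M * Matrix.vecMulVec h h * M))
    (μ : Fin d → ℝ)
    (hμ : μ = -(A⁻¹.mulVec ((T + (2 * (m₀ - c)) • M).mulVec h))) :
    (Real.sqrt (Real.pi ^ d))⁻¹ *
        ∫ w : Fin d → ℝ,
          Real.exp (-(w ⬝ᵥ S.mulVec w) - ((w + h) ⬝ᵥ T.mulVec (w + h)) -
            (w ⬝ᵥ M.mulVec w - (w + h) ⬝ᵥ M.mulVec (w + h) + c) ^ 2) =
      (Real.sqrt A.det)⁻¹ *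
        Real.exp (-(h ⬝ᵥ T.mulVec h + (m₀ - c) ^ 2 - μ ⬝ᵥ A.mulVec μ)) := by
  classical
  have hTsymm : T.IsSymm := by
    have := hT.1.eq; rwa [Matrix.conjTranspose_eq_transpose_of_trivial] at this
  have hSsymm : S.IsSymm := by
    have := hS.1.eq; rwa [Matrix.conjTranspose_eq_transpose_of_trivial] at this
  have hvsymm : (Matrix.vecMulVec h h).IsSymm := by
    ext i j; simp [Matrix.vecMulVec_apply, Matrix.transpose_apply, mul_comm]
  have hAsymm : A.IsSymm := by
    rw [hA]
    unfold Matrix.IsSymm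
    rw [Matrix.transpose_add, Matrix.transpose_add, Matrix.transpose_smul,
      Matrix.transpose_mul, Matrix.transpose_mul, hvsymm.eq, hM.eq, hSsymm.eq, hTsymm.eq,
      Matrix.mul_assoc]
  -- quadratic form of A
  have hquad : ∀ x : Fin d → ℝ, x ⬝ᵥ A.mulVec x
      = x ⬝ᵥ S.mulVec x + x ⬝ᵥ T.mulVec x + 4 * (x ⬝ᵥ M.mulVec h) ^ 2 := by
    intro x
    rw [hA, Matrix.add_mulVec, Matrix.add_mulVec, dotProduct_add, dotProduct_add,
      Matrix.smul_mulVec, ← Matrix.mulVec_mulVec, ← Matrix.mulVec_mulVec,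
      vecMulVec_mulVec', Matrix.mulVec_smul, dotProduct_smul, dotProduct_smul,
      dot_symm hM h x]
    push_cast [smul_eq_mul]
    ring
  have hApd : A.PosDef := by
    refine Matrix.PosDef.of_dotProduct_mulVec_pos (by show Aᴴ = A; rw [Matrix.conjTranspose_eq_transpose_of_trivial]; exact hAsymm) fun x hx => ?_
    simp only [star_trivial]
    have h1 := hS.dotProduct_mulVec_pos hx
    have h2 := hT.dotProduct_mulVec_pos hx
    simp only [star_trivial] at h1 h2
    rw [hquad x]
    nlinarith [sq_nonneg (x ⬝ᵥ M.mulVec h)]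
  have hdet : IsUnit A.det := isUnit_iff_ne_zero.2 hApd.det_pos.ne'
  have hAμ : A.mulVec μ = -((T + (2 * (m₀ - c)) • M).mulVec h) := by
    rw [hμ, Matrix.mulVec_neg, Matrix.mulVec_mulVec, Matrix.mul_nonsing_inv _ hdet,
      Matrix.one_mulVec]
  set K := h ⬝ᵥ T.mulVec h + (m₀ - c) ^ 2 - μ ⬝ᵥ A.mulVec μ with hK
  have key : ∀ w : Fin d → ℝ,
      Real.exp (-(w ⬝ᵥ S.mulVec w) - ((w + h) ⬝ᵥ T.mulVec (w + h)) -
        (w ⬝ᵥ M.mulVec w - (w + h) ⬝ᵥ M.mulVec (w + h) + c) ^ 2)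
      = Real.exp (-K) * Real.exp (-((w - μ) ⬝ᵥ A.mulVec (w - μ))) := by
    intro w
    rw [← Real.exp_add]
    congr 1
    have E1 : (w + h) ⬝ᵥ T.mulVec (w + h)
        = w ⬝ᵥ T.mulVec w + 2 * (w ⬝ᵥ T.mulVec h) + h ⬝ᵥ T.mulVec h := by
      rw [Matrix.mulVec_add, dotProduct_add, add_dotProduct,
        add_dotProduct, dot_symm hTsymm h w]
      ring
    have E2 : (w + h) ⬝ᵥ M.mulVec (w + h)
        = w ⬝ᵥ M.mulVec w + 2 * (w ⬝ᵥ M.mulVec h) + m₀ := by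
      rw [hm₀, Matrix.mulVec_add, dotProduct_add, add_dotProduct,
        add_dotProduct, dot_symm hM h w]
      ring
    have E3 : (w - μ) ⬝ᵥ A.mulVec (w - μ)
        = w ⬝ᵥ A.mulVec w - 2 * (w ⬝ᵥ A.mulVec μ) + μ ⬝ᵥ A.mulVec μ := by
      rw [Matrix.mulVec_sub, dotProduct_sub, sub_dotProduct,
        sub_dotProduct, dot_symm hAsymm μ w]
      ring
    have E5 : w ⬝ᵥ A.mulVec μ
        = -(w ⬝ᵥ T.mulVec h + (2 * (m₀ - c)) * (w ⬝ᵥ M.mulVec h)) := by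
      rw [hAμ, dotProduct_neg, Matrix.add_mulVec, Matrix.smul_mulVec,
        dotProduct_add, dotProduct_smul, smul_eq_mul]
    rw [E1, E2, E3, hquad w, E5, hK]
    ring
  rw [MeasureTheory.integral_congr_ae (Filter.Eventually.of_forall key),
    MeasureTheory.integral_const_mul,
    integral_sub_right_eq_self (fun w : Fin d → ℝ => Real.exp (-(w ⬝ᵥ A.mulVec w))) μ,
    integral_exp_neg_quadForm A hApd]
  have hπ : Real.sqrt (Real.pi ^ d) = Real.sqrt Real.pi ^ d := by
    have hsq : Real.sqrt Real.pi ^ d * Real.sqrt Real.pi ^ d = Real.pi ^ d := by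
      rw [← mul_pow, Real.mul_self_sqrt Real.pi_pos.le]
    rw [← hsq, Real.sqrt_mul_self (by positivity)]
  have h0 : Real.sqrt Real.pi ^ d ≠ 0 := by positivity
  have h1 : Real.sqrt A.det ≠ 0 := by
    have := hApd.det_pos; positivity
  rw [hπ]
  field_simp
end
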